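/- arXiv:2511.04241 — 4 statements merged into one kernel-verified Lean document; each statement's English description precedes it below -/
import Mathlib

section
/- Let (X,d) be a metric space, let A, B, C ∈ X be three distinct points, and let γ be a geodesic from A to C. Set R = d(A,B) and let D > 0 be such that dist(B, γ) ≤ D, R ≥ 4D, and d(A,C) ≥ R + 4D. Let L_1, L_2 ⊆ X be finite sets such that: (1) every point of L_1 ∪ L_2 is at distance at most D from the image of γ; (2) d(A,x) ≤ R + 4D for every x ∈ L_1 and d(A,y) ≥ R − 4D for every y ∈ L_2. Let N be the number of points x ∈ L_1 ∪ L_2 with R − 4D ≤ d(A,x) ≤ R + 4D. Then for every finite set L_3 with L_1 △ L_2 ⊆ L_3 ⊆ L_1 ∪ L_2 one has 0 ≤ TSP(A, L_1, B) + TSP(B, L_2, C) − TSP(A, L_3, C) ≤ 24(N+1)D. -/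
open Metric

noncomputable def routeLength {X : Type*} [MetricSpace X] : X → X → List X → ℝ
  | A, B, [] => dist A B
  | A, B, x :: xs => dist A x + routeLength x B xs


noncomputable def TSP {X : Type*} [MetricSpace X] [DecidableEq X] (A : X) (L : Finset X) (B : X) : ℝ :=
  sInf (routeLength A B '' {l : List X | l.Nodup ∧ l.toFinset = L})

namespace TSPAux
variable {X : Type*} [MetricSpace X]

noncomputable def walk : X → List X → ℝ
  | _, [] => 0
  | a, x :: xs => dist a x + walk x xs

@[simp] lemma walk_nil (a : X) : walk a [] = 0 := rfl
@[simp] lemma walk_cons (a x : X) (l : List X) : walk a (x :: l) = dist a x + walk x l := rfl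
@[simp] lemma rl_nil (a b : X) : routeLength a b [] = dist a b := rfl
@[simp] lemma rl_cons (a b x : X) (l : List X) :
    routeLength a b (x :: l) = dist a x + routeLength x b l := rfl

omit [MetricSpace X] in
lemma gld_nil (a : X) : ([] : List X).getLastD a = a := rfl
omit [MetricSpace X] in
lemma gld_cons (a x : X) (t : List X) : (x :: t).getLastD a = t.getLastD x := by
  cases t <;> rfl

omit [MetricSpace X] in
lemma gld_mem_cons (x : X) (t : List X) : t.getLastD x ∈ x :: t := by
  induction t generalizing x with
  | nil => simp [gld_nil]
  | cons a s ih =>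
      rw [gld_cons]
      exact List.mem_cons_of_mem x (ih a)

lemma rl_eq_walk (a b : X) (l : List X) :
    routeLength a b l = walk a l + dist (l.getLastD a) b := by
  induction l generalizing a with
  | nil => simp [gld_nil]
  | cons x t ih => rw [rl_cons, walk_cons, gld_cons, ih x, add_assoc]

lemma walk_append (a : X) (u v : List X) :
    walk a (u ++ v) = walk a u + walk (u.getLastD a) v := by
  induction u generalizing a with
  | nil => simp [gld_nil]
  | cons x t ih => rw [List.cons_append, walk_cons, walk_cons, gld_cons, ih x, add_assoc]

omit [MetricSpace X] in
lemma getLastD_append (a : X) (u v : List X) :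
    (u ++ v).getLastD a = v.getLastD (u.getLastD a) := by
  induction u generalizing a with
  | nil => simp [gld_nil]
  | cons x t ih => rw [List.cons_append, gld_cons, gld_cons, ih x]


lemma walk_nonneg (a : X) (l : List X) : 0 ≤ walk a l := by
  induction l generalizing a with
  | nil => simp
  | cons x t ih => simpa using add_nonneg dist_nonneg (ih x)

lemma rl_nonneg (a b : X) (l : List X) : 0 ≤ routeLength a b l := by
  rw [rl_eq_walk]; exact add_nonneg (walk_nonneg _ _) dist_nonneg

lemma rl_append (a b x : X) (u v : List X) :
    routeLength a b (u ++ x :: v) = routeLength a x u + routeLength x b v := by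
  rw [rl_eq_walk, walk_append, rl_eq_walk, rl_eq_walk, getLastD_append, gld_cons,
    walk_cons]
  ring

lemma rl_start_triangle (a c b : X) (l : List X) :
    routeLength a b l ≤ dist a c + routeLength c b l := by
  cases l with
  | nil => simpa using dist_triangle a c b
  | cons x t =>
    simp only [rl_cons, ← add_assoc]
    exact add_le_add_left (dist_triangle a c x) _

lemma rl_sublist {s l : List X} (h : s.Sublist l) (a b : X) :
    routeLength a b s ≤ routeLength a b l := by
  induction h generalizing a with
  | slnil => exact le_refl _
  | @cons l₁ l₂ x h ih =>
      exact (ih a).trans (by simpa using rl_start_triangle a x b l₂)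
  | cons_cons x h ih => simpa using ih _

section Uncross

variable (τ : X → ℝ) (G : Set X) (D lo hi : ℝ)

lemma six_ineq (hD : 0 ≤ D) (hgap : lo + 6*D ≤ hi)
    (dub : ∀ x ∈ G, ∀ y ∈ G, dist x y ≤ |τ x - τ y| + 2*D)
    (dlb : ∀ x ∈ G, ∀ y ∈ G, |τ x - τ y| - 2*D ≤ dist x y)
    {x y f h e z : X}
    (hx : x ∈ G) (hy : y ∈ G) (hf : f ∈ G) (hh : h ∈ G) (he : e ∈ G) (hz : z ∈ G)
    (tx : τ x ≤ lo) (ty : τ y ≤ lo) (tf : τ f ≤ lo)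
    (th : hi ≤ τ h) (te : hi ≤ τ e) (tz : hi ≤ τ z) :
    dist x y + dist f h + dist e z ≤ dist x h + dist e y + dist f z := by
  have h1 := dub x hx y hy
  have h2 := dub f hf h hh
  have h3 := dub e he z hz
  have h4 := dlb x hx h hh
  have h5 := dlb e he y hy
  have h6 := dlb f hf z hz
  have e2 : |τ f - τ h| = τ h - τ f := by
    rw [abs_of_nonpos (by linarith)]; ring
  have e4 : |τ x - τ h| = τ h - τ x := by
    rw [abs_of_nonpos (by linarith)]; ring
  have e5 : |τ e - τ y| = τ e - τ y := abs_of_nonneg (by linarith)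
  have e6 : |τ f - τ z| = τ z - τ f := by
    rw [abs_of_nonpos (by linarith)]; ring
  rw [e2] at h2; rw [e4] at h4; rw [e5] at h5; rw [e6] at h6
  rcases abs_cases (τ x - τ y) with ⟨e1, _⟩ | ⟨e1, _⟩ <;>
    rcases abs_cases (τ e - τ z) with ⟨e3, _⟩ | ⟨e3, _⟩ <;>
      rw [e1] at h1 <;> rw [e3] at h3 <;> linarith

lemma swap_le (hD : 0 ≤ D) (hgap : lo + 6*D ≤ hi)
    (dub : ∀ x ∈ G, ∀ y ∈ G, dist x y ≤ |τ x - τ y| + 2*D)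
    (dlb : ∀ x ∈ G, ∀ y ∈ G, |τ x - τ y| - 2*D ≤ dist x y)
    (A C : X) (hA : A ∈ G) (hC : C ∈ G) (hτA : τ A ≤ lo) (hτC : hi ≤ τ C)
    (P H Y S : List X)
    (hP : ∀ x ∈ P, x ∈ G ∧ τ x ≤ lo)
    (hHne : H ≠ []) (hH : ∀ x ∈ H, x ∈ G ∧ hi ≤ τ x)
    (hYne : Y ≠ []) (hY : ∀ x ∈ Y, x ∈ G ∧ τ x ≤ lo)
    (hS : S = [] ∨ ∃ z S', S = z :: S' ∧ z ∈ G ∧ hi ≤ τ z) :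
    routeLength A C (P ++ Y ++ H ++ S) ≤ routeLength A C (P ++ H ++ Y ++ S) := by
  obtain ⟨h, H', rfl⟩ : ∃ h H', H = h :: H' := by
    cases H with
    | nil => exact absurd rfl hHne
    | cons a t => exact ⟨a, t, rfl⟩
  obtain ⟨y, Y', rfl⟩ : ∃ y Y', Y = y :: Y' := by
    cases Y with
    | nil => exact absurd rfl hYne
    | cons a t => exact ⟨a, t, rfl⟩
  set x := P.getLastD A with hxdef
  have hxG : x ∈ G ∧ τ x ≤ lo := by
    rcases List.mem_cons.1 (gld_mem_cons A P) with hm | hm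
    · rw [hxdef, hm]; exact ⟨hA, hτA⟩
    · exact hP _ hm
  set e := H'.getLastD h with hedef
  have heG : e ∈ G ∧ hi ≤ τ e := hH _ (gld_mem_cons h H')
  set f := Y'.getLastD y with hfdef
  have hfG : f ∈ G ∧ τ f ≤ lo := hY _ (gld_mem_cons y Y')
  have hhG := hH h (by simp)
  have hyG := hY y (by simp)
  -- expand both sides
  have expandL : routeLength A C (P ++ (y :: Y') ++ (h :: H') ++ S)
      = walk A P + (dist x y + walk y Y') + (dist f h + walk h H')
        + (walk e S + dist (S.getLastD e) C) := by
    rw [rl_eq_walk]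
    rw [show P ++ (y :: Y') ++ (h :: H') ++ S = P ++ ((y :: Y') ++ ((h :: H') ++ S)) by
      simp [List.append_assoc]]
    rw [walk_append, walk_append, walk_append]
    rw [getLastD_append, getLastD_append, getLastD_append]
    rw [gld_cons, gld_cons, walk_cons, walk_cons, ← hxdef, ← hfdef, ← hedef]
    ring
  have expandR : routeLength A C (P ++ (h :: H') ++ (y :: Y') ++ S)
      = walk A P + (dist x h + walk h H') + (dist e y + walk y Y')
        + (walk f S + dist (S.getLastD f) C) := by
    rw [rl_eq_walk]
    rw [show P ++ (h :: H') ++ (y :: Y') ++ S = P ++ ((h :: H') ++ ((y :: Y') ++ S)) by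
      simp [List.append_assoc]]
    rw [walk_append, walk_append, walk_append]
    rw [getLastD_append, getLastD_append, getLastD_append]
    rw [gld_cons, gld_cons, walk_cons, walk_cons, ← hxdef, ← hedef, ← hfdef]
    ring
  rw [expandL, expandR]
  rcases hS with rfl | ⟨z, S', rfl, hzG, hz⟩
  · simp only [walk_nil, gld_nil, zero_add]
    have := six_ineq τ G D lo hi hD hgap dub dlb hxG.1 hyG.1 hfG.1 hhG.1 heG.1 hC
      hxG.2 hyG.2 hfG.2 hhG.2 heG.2 hτC
    linarith
  · rw [walk_cons, walk_cons, gld_cons, gld_cons]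
    have := six_ineq τ G D lo hi hD hgap dub dlb hxG.1 hyG.1 hfG.1 hhG.1 heG.1 hzG
      hxG.2 hyG.2 hfG.2 hhG.2 heG.2 hz
    linarith

end Uncross
section UncrossMain
variable {X : Type*} [MetricSpace X]
variable (τ : X → ℝ) (G : Set X) (D lo hi : ℝ)

omit [MetricSpace X] in
lemma dropWhile_append_of_pos {p : X → Bool} :
    ∀ {u : List X} (v : List X), (∀ x ∈ u, p x = true) →
      (u ++ v).dropWhile p = v.dropWhile p := by
  intro u
  induction u with
  | nil => intro v _; rfl
  | cons a t ih =>
      intro v h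
      rw [List.cons_append, List.dropWhile_cons]
      simp only [h a (by simp), if_true]
      exact ih v (fun x hx => h x (by simp [hx]))

omit [MetricSpace X] in
lemma dropWhile_head_false {p : X → Bool} :
    ∀ {l : List X} {x : X} {xs : List X}, l.dropWhile p = x :: xs → p x = false := by
  intro l
  induction l with
  | nil => intro x xs h; simp at h
  | cons a t ih =>
      intro x xs h
      rw [List.dropWhile_cons] at h
      by_cases hp : p a = true
      · rw [if_pos hp] at h; exact ih h
      · rw [if_neg hp] at h
        cases h
        exact Bool.eq_false_iff.2 hp

lemma uncross (hD : 0 < D) (hgap : lo + 6*D ≤ hi)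
    (dub : ∀ x ∈ G, ∀ y ∈ G, dist x y ≤ |τ x - τ y| + 2*D)
    (dlb : ∀ x ∈ G, ∀ y ∈ G, |τ x - τ y| - 2*D ≤ dist x y)
    (A C : X) (hA : A ∈ G) (hC : C ∈ G) (hτA : τ A ≤ lo) (hτC : hi ≤ τ C) :
    ∀ (n : ℕ) (l : List X),
      (l.dropWhile (fun x => decide (τ x ≤ lo))).length ≤ n →
      (∀ x ∈ l, x ∈ G ∧ (τ x ≤ lo ∨ hi ≤ τ x)) →
      ∃ l₁ l₂ : List X, (l₁ ++ l₂).Perm l ∧ (∀ x ∈ l₁, x ∈ G ∧ τ x ≤ lo) ∧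
        (∀ x ∈ l₂, x ∈ G ∧ hi ≤ τ x) ∧
        routeLength A C (l₁ ++ l₂) ≤ routeLength A C l := by
  classical
  let p : X → Bool := fun x => decide (τ x ≤ lo)
  let q : X → Bool := fun x => decide (hi ≤ τ x)
  show ∀ (n : ℕ) (l : List X), (l.dropWhile p).length ≤ n → _
  have base : ∀ l : List X, l.dropWhile p = [] →
      (∀ x ∈ l, x ∈ G ∧ (τ x ≤ lo ∨ hi ≤ τ x)) →
      ∃ l₁ l₂ : List X, (l₁ ++ l₂).Perm l ∧ (∀ x ∈ l₁, x ∈ G ∧ τ x ≤ lo) ∧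
        (∀ x ∈ l₂, x ∈ G ∧ hi ≤ τ x) ∧
        routeLength A C (l₁ ++ l₂) ≤ routeLength A C l := by
    intro l hZ hmem
    refine ⟨l, [], by simp, ?_, by simp, by simp⟩
    intro x hx
    have hxl : x ∈ l.takeWhile p := by
      conv at hx => rw [← List.takeWhile_append_dropWhile (p := p) (l := l), hZ]
      simpa using hx
    have hpx : p x = true := List.mem_takeWhile_imp hxl
    exact ⟨(hmem x hx).1, of_decide_eq_true hpx⟩
  intro n
  induction n with
  | zero =>
      intro l hlen hmem
      exact base l (List.length_eq_zero_iff.1 (Nat.le_zero.1 hlen)) hmem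
  | succ n ih =>
      intro l hlen hmem
      cases hZ : l.dropWhile p with
      | nil => exact base l hZ hmem
      | cons h Z₁ =>
        rw [hZ] at hlen
        have hsub : ∀ x ∈ l.dropWhile p, x ∈ l :=
          fun x hx => (List.dropWhile_sublist p).mem hx
        have hZmem : ∀ x ∈ h :: Z₁, x ∈ l := by rw [← hZ]; exact hsub
        have hhl : h ∈ l := hZmem h (by simp)
        have hph : p h = false := dropWhile_head_false hZ
        have hτh : hi ≤ τ h := by
          rcases (hmem h hhl).2 with h1 | h1
          · exact absurd h1 (of_decide_eq_false hph)
          · exact h1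
        have hlPZ : l = l.takeWhile p ++ (h :: Z₁) := by
          rw [← hZ, List.takeWhile_append_dropWhile]
        have hPmem : ∀ x ∈ l.takeWhile p, x ∈ G ∧ τ x ≤ lo := by
          intro x hx
          have hxl : x ∈ l := (List.takeWhile_sublist p).mem hx
          have hpx : p x = true := List.mem_takeWhile_imp hx
          exact ⟨(hmem x hxl).1, of_decide_eq_true hpx⟩
        -- split Z₁ into the high block and the rest
        have hZ₁split : Z₁ = Z₁.takeWhile q ++ Z₁.dropWhile q :=
          (List.takeWhile_append_dropWhile (p := q) (l := Z₁)).symm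
        have hHmem : ∀ x ∈ h :: Z₁.takeWhile q, x ∈ G ∧ hi ≤ τ x := by
          intro x hx
          rcases List.mem_cons.1 hx with rfl | hx
          · exact ⟨(hmem x hhl).1, hτh⟩
          · have hxl : x ∈ l := hZmem x (List.mem_cons_of_mem h
              ((List.takeWhile_sublist q).mem hx))
            have hqx : q x = true := List.mem_takeWhile_imp hx
            exact ⟨(hmem x hxl).1, of_decide_eq_true hqx⟩
        cases hZ₂ : Z₁.dropWhile q with
        | nil =>
            have e : Z₁.takeWhile q = Z₁ := by
              rw [hZ₂, List.append_nil] at hZ₁split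
              exact hZ₁split.symm
            refine ⟨l.takeWhile p, h :: Z₁.takeWhile q, ?_, hPmem, hHmem, ?_⟩
            · rw [e, ← hlPZ]
            · rw [e, ← hlPZ]
        | cons y S₀ =>
            have hZ₂mem : ∀ x ∈ y :: S₀, x ∈ l := by
              rw [← hZ₂]
              intro x hx
              exact hZmem x (List.mem_cons_of_mem h ((List.dropWhile_sublist q).mem hx))
            have hyl : y ∈ l := hZ₂mem y (by simp)
            have hqy : q y = false := dropWhile_head_false hZ₂
            have hτy : τ y ≤ lo := by
              rcases (hmem y hyl).2 with h1 | h1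
              · exact h1
              · exact absurd h1 (of_decide_eq_false hqy)
            have hS₀split : S₀ = S₀.takeWhile p ++ S₀.dropWhile p :=
              (List.takeWhile_append_dropWhile (p := p) (l := S₀)).symm
            have hYmem : ∀ x ∈ y :: S₀.takeWhile p, x ∈ G ∧ τ x ≤ lo := by
              intro x hx
              rcases List.mem_cons.1 hx with rfl | hx
              · exact ⟨(hmem x hyl).1, hτy⟩
              · have hxl : x ∈ l := hZ₂mem x (List.mem_cons_of_mem y
                  ((List.takeWhile_sublist p).mem hx))
                have hpx : p x = true := List.mem_takeWhile_imp hx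
                exact ⟨(hmem x hxl).1, of_decide_eq_true hpx⟩
            have hSmem : ∀ x ∈ S₀.dropWhile p, x ∈ l := by
              intro x hx
              exact hZ₂mem x (List.mem_cons_of_mem y ((List.dropWhile_sublist p).mem hx))
            have hScond : S₀.dropWhile p = [] ∨
                ∃ z S', S₀.dropWhile p = z :: S' ∧ z ∈ G ∧ hi ≤ τ z := by
              cases hSc : S₀.dropWhile p with
              | nil => exact Or.inl rfl
              | cons z S' =>
                  have hzl : z ∈ l := hSmem z (by rw [hSc]; simp)
                  have hpz : p z = false := dropWhile_head_false hSc
                  have hτz : hi ≤ τ z := by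
                    rcases (hmem z hzl).2 with h1 | h1
                    · exact absurd h1 (of_decide_eq_false hpz)
                    · exact h1
                  exact Or.inr ⟨z, S', rfl, (hmem z hzl).1, hτz⟩
            -- names
            set P : List X := l.takeWhile p with hPdef
            set H : List X := h :: Z₁.takeWhile q with hHdef
            set Y : List X := y :: S₀.takeWhile p with hYdef
            set S : List X := S₀.dropWhile p with hSdef
            have hdecomp : l = P ++ H ++ Y ++ S := by
              rw [hlPZ]
              have e9 : h :: Z₁ = H ++ Y ++ S := by
                rw [hHdef, hYdef]
                conv_lhs => rw [hZ₁split, hZ₂]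
                conv_lhs => rw [hS₀split]
                simp [List.append_assoc]
              rw [e9]
              simp [List.append_assoc]
            have hswap : routeLength A C (P ++ Y ++ H ++ S) ≤ routeLength A C l := by
              conv_rhs => rw [hdecomp]
              exact swap_le τ G D lo hi (le_of_lt hD) hgap dub dlb A C hA hC hτA hτC
                P H Y S hPmem (by rw [hHdef]; simp) hHmem (by rw [hYdef]; simp) hYmem hScond
            have hperm : (P ++ Y ++ H ++ S).Perm l := by
              have e1 : P ++ Y ++ H ++ S = (P ++ (Y ++ H)) ++ S := by
                simp [List.append_assoc]
              have e2 : P ++ H ++ Y ++ S = (P ++ (H ++ Y)) ++ S := by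
                simp [List.append_assoc]
              rw [hdecomp, e1, e2]
              exact ((List.perm_append_comm.append_left P).append_right S)
            have hmeasure : ((P ++ Y ++ H ++ S).dropWhile p).length ≤ n := by
              have e3 : P ++ Y ++ H ++ S = (P ++ Y) ++ (H ++ S) := by
                simp [List.append_assoc]
              have hPY : ∀ x ∈ P ++ Y, p x = true := by
                intro x hx
                rcases List.mem_append.1 hx with hx | hx
                · exact decide_eq_true (hPmem x hx).2
                · exact decide_eq_true (hYmem x hx).2
              rw [e3, dropWhile_append_of_pos (H ++ S) hPY]
              have : (H ++ S).dropWhile p = H ++ S := by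
                rw [hHdef, List.cons_append, List.dropWhile_cons, if_neg (by simp [hph])]
              rw [this]
              -- length accounting
              have c0 : Z₁.length = (Z₁.takeWhile q).length + (y :: S₀).length := by
                conv_lhs => rw [hZ₁split, hZ₂]
                rw [List.length_append]
              have c1 : (S₀.dropWhile p).length ≤ S₀.length :=
                (List.dropWhile_sublist p).length_le
              have c2 : (h :: Z₁).length ≤ n + 1 := hlen
              simp only [List.length_append, List.length_cons, hHdef, hYdef, hSdef] at *
              omega
            have hmem' : ∀ x ∈ P ++ Y ++ H ++ S, x ∈ G ∧ (τ x ≤ lo ∨ hi ≤ τ x) := by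
              intro x hx
              exact hmem x (hperm.mem_iff.1 hx)
            obtain ⟨l₁, l₂, hperm2, hc1, hc2, hrl⟩ := ih (P ++ Y ++ H ++ S) hmeasure hmem'
            exact ⟨l₁, l₂, hperm2.trans hperm, hc1, hc2, hrl.trans hswap⟩

end UncrossMain
section Chain
variable {X : Type*} [MetricSpace X]

lemma walk_sorted (τ : X → ℝ) (G : Set X) (D : ℝ)
    (dub : ∀ x ∈ G, ∀ y ∈ G, dist x y ≤ |τ x - τ y| + 2*D) :
    ∀ (M : List X) (a : X), a ∈ G → (∀ x ∈ M, x ∈ G) →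
      M.Chain' (fun u v => τ u ≤ τ v) →
      walk a M ≤ |τ a - τ (M.headD a)| + (τ (M.getLastD a) - τ (M.headD a))
        + 2*D*M.length := by
  intro M
  induction M with
  | nil => intro a _ _ _; simp [gld_nil]
  | cons m M' ih =>
      intro a haG hmem hchain
      have hmG : m ∈ G := hmem m (by simp)
      have h1 : dist a m ≤ |τ a - τ m| + 2*D := dub a haG m hmG
      cases hM' : M' with
      | nil =>
          subst hM'
          simp only [walk_cons, walk_nil, add_zero, List.headD_cons, List.length_cons,
            List.length_nil, gld_cons, gld_nil]
          push_cast
          linarith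
      | cons m' M'' =>
          have hIH := ih m hmG (fun x hx => hmem x (List.mem_cons_of_mem m hx))
            hchain.tail
          rw [hM'] at hIH
          have horder : τ m ≤ τ m' := by
            rw [hM'] at hchain
            exact (List.isChain_cons_cons.1 hchain).1
          have habs : |τ m - τ m'| = τ m' - τ m := by
            rw [abs_of_nonpos (by linarith)]; ring
          simp only [List.headD_cons] at hIH
          rw [habs] at hIH
          simp only [hM', walk_cons, List.headD_cons, gld_cons, List.length_cons]
          simp only [gld_cons] at hIH ⊢
          simp only [walk_cons, List.length_cons] at hIH
          push_cast
          push_cast at hIH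
          linarith

lemma headD_mem {a : X} {M : List X} (h : M ≠ []) : M.headD a ∈ M := by
  cases M with
  | nil => exact absurd rfl h
  | cons m M' => simp

lemma getLastD_mem {a : X} {M : List X} (h : M ≠ []) : M.getLastD a ∈ M := by
  cases M with
  | nil => exact absurd rfl h
  | cons m M' => rw [gld_cons]; exact gld_mem_cons m M'

end Chain
section TSPLemmas
variable {X : Type*} [MetricSpace X]

lemma TSP_le [DecidableEq X] (A B : X) (L : Finset X) {l : List X}
    (h1 : l.Nodup) (h2 : l.toFinset = L) : TSP A L B ≤ routeLength A B l := by
  apply csInf_le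
  · exact ⟨0, by rintro r ⟨l', _, rfl⟩; exact rl_nonneg _ _ _⟩
  · exact ⟨l, ⟨h1, h2⟩, rfl⟩

lemma TSP_approx [DecidableEq X] (A B : X) (L : Finset X) {ε : ℝ} (hε : 0 < ε) :
    ∃ l : List X, l.Nodup ∧ l.toFinset = L ∧ routeLength A B l < TSP A L B + ε := by
  have hne : (routeLength A B '' {l : List X | l.Nodup ∧ l.toFinset = L}).Nonempty :=
    ⟨routeLength A B L.toList, ⟨L.toList, ⟨L.nodup_toList, L.toList_toFinset⟩, rfl⟩⟩
  obtain ⟨r, ⟨l, ⟨h1, h2⟩, rfl⟩, hlt⟩ := Real.lt_sInf_add_pos hne hε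
  exact ⟨l, h1, h2, hlt⟩

end TSPLemmas
end TSPAux

open scoped symmDiff
open TSPAux

set_option maxHeartbeats 1000000

/-- **Main combinatorial lemma on the defect of the TSP.** Let `γ : [0,T] → X` be a geodesic
from `A` to `C` (with `T = d(A,C)`), `R = d(A,B)`, `D > 0` with `dist(B,γ) ≤ D`, `R ≥ 4D`
and `d(A,C) ≥ R + 4D`. Let `L₁, L₂` be finite sets in the `D`-neighbourhood of `γ` with
`d(A,x) ≤ R + 4D` on `L₁` and `d(A,y) ≥ R − 4D` on `L₂`, and let `N` be the number of
points of `L₁ ∪ L₂` with `R − 4D ≤ d(A,·) ≤ R + 4D`. Then for every `L₃` with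
`L₁ △ L₂ ⊆ L₃ ⊆ L₁ ∪ L₂`,
`0 ≤ TSP(A,L₁,B) + TSP(B,L₂,C) − TSP(A,L₃,C) ≤ 24(N+1)D`. -/
theorem tsp_defect_bound
    {X : Type*} [MetricSpace X] [DecidableEq X]
    (A B C : X) (hAB : A ≠ B) (hBC : B ≠ C) (hAC : A ≠ C)
    (T : ℝ) (γ : ℝ → X)
    (hT : T = dist A C) (hγA : γ 0 = A) (hγC : γ T = C)
    (hgeo : ∀ s ∈ Set.Icc (0 : ℝ) T, ∀ t ∈ Set.Icc (0 : ℝ) T, dist (γ s) (γ t) = |s - t|)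
    (R D : ℝ) (hR : R = dist A B) (hD : 0 < D)
    (hBγ : infDist B (γ '' Set.Icc 0 T) ≤ D)
    (hRD : 4 * D ≤ R) (hACR : R + 4 * D ≤ dist A C)
    (L₁ L₂ : Finset X)
    (hL : ∀ x ∈ L₁ ∪ L₂, infDist x (γ '' Set.Icc 0 T) ≤ D)
    (hL₁ : ∀ x ∈ L₁, dist A x ≤ R + 4 * D)
    (hL₂ : ∀ y ∈ L₂, R - 4 * D ≤ dist A y)
    (N : ℕ)
    (hN : N = ((L₁ ∪ L₂).filter
      (fun x => R - 4 * D ≤ dist A x ∧ dist A x ≤ R + 4 * D)).card)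
    (L₃ : Finset X) (hL₃₁ : L₁ ∆ L₂ ⊆ L₃) (hL₃₂ : L₃ ⊆ L₁ ∪ L₂) :
    0 ≤ TSP A L₁ B + TSP B L₂ C - TSP A L₃ C ∧
      TSP A L₁ B + TSP B L₂ C - TSP A L₃ C ≤ 24 * (N + 1) * D := by
  classical
  have hT0 : 0 ≤ T := hT ▸ dist_nonneg
  -- compactness of the geodesic image and projections
  have hlip : LipschitzOnWith 1 γ (Set.Icc 0 T) := by
    apply LipschitzOnWith.of_dist_le_mul
    intro s hs t ht
    rw [hgeo s hs t ht, Real.dist_eq]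
    simp
  have hcomp : IsCompact (γ '' Set.Icc 0 T) :=
    (isCompact_Icc).image_of_continuousOn hlip.continuousOn
  have hne : (γ '' Set.Icc 0 T).Nonempty := ⟨γ 0, ⟨0, ⟨le_refl 0, hT0⟩, rfl⟩⟩
  have hproj : ∀ x : X, ∃ t : ℝ, t ∈ Set.Icc (0:ℝ) T ∧
      infDist x (γ '' Set.Icc 0 T) = dist x (γ t) := by
    intro x
    obtain ⟨y, hy, hxy⟩ := hcomp.exists_infDist_eq_dist hne x
    obtain ⟨t, ht, rfl⟩ := hy
    exact ⟨t, ht, hxy⟩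
  choose τ hτmem hτdist using hproj
  set G : Set X := {x | dist x (γ (τ x)) ≤ D} with hGdef
  have hGof : ∀ x : X, infDist x (γ '' Set.Icc 0 T) ≤ D → x ∈ G := by
    intro x h
    show dist x (γ (τ x)) ≤ D
    rw [← hτdist x]; exact h
  have hAG : A ∈ G := by
    apply hGof
    calc infDist A (γ '' Set.Icc 0 T) ≤ dist A (γ 0) :=
          infDist_le_dist_of_mem ⟨0, ⟨le_refl 0, hT0⟩, rfl⟩
      _ ≤ D := by rw [hγA, dist_self]; exact hD.le
  have hCG : C ∈ G := by
    apply hGof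
    calc infDist C (γ '' Set.Icc 0 T) ≤ dist C (γ T) :=
          infDist_le_dist_of_mem ⟨T, ⟨hT0, le_refl T⟩, rfl⟩
      _ ≤ D := by rw [hγC, dist_self]; exact hD.le
  have hBG : B ∈ G := hGof B hBγ
  have hLG : ∀ x ∈ L₁ ∪ L₂, x ∈ G := fun x hx => hGof x (hL x hx)
  have hGd : ∀ x ∈ G, dist x (γ (τ x)) ≤ D := fun x hx => hx
  -- distance bounds via projections
  have dub : ∀ x ∈ G, ∀ y ∈ G, dist x y ≤ |τ x - τ y| + 2*D := by
    intro x hx y hy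
    calc dist x y ≤ dist x (γ (τ x)) + dist (γ (τ x)) (γ (τ y)) + dist (γ (τ y)) y :=
          dist_triangle4 x (γ (τ x)) (γ (τ y)) y
      _ ≤ D + |τ x - τ y| + D := by
          have := hgeo (τ x) (hτmem x) (τ y) (hτmem y)
          rw [this, dist_comm (γ (τ y)) y]
          exact add_le_add (add_le_add (hGd x hx) (le_refl _)) (hGd y hy)
      _ = |τ x - τ y| + 2*D := by ring
  have dlb : ∀ x ∈ G, ∀ y ∈ G, |τ x - τ y| - 2*D ≤ dist x y := by
    intro x hx y hy
    have h1 : |τ x - τ y| = dist (γ (τ x)) (γ (τ y)) :=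
      (hgeo (τ x) (hτmem x) (τ y) (hτmem y)).symm
    have h2 : dist (γ (τ x)) (γ (τ y)) ≤ dist (γ (τ x)) x + dist x y + dist y (γ (τ y)) :=
      dist_triangle4 _ x y _
    have h3 : dist (γ (τ x)) x ≤ D := by rw [dist_comm]; exact hGd x hx
    have h4 : dist y (γ (τ y)) ≤ D := hGd y hy
    rw [h1]
    linarith [h2, h3, h4]
  have dAτ : ∀ x ∈ G, |dist A x - τ x| ≤ D := by
    intro x hx
    have h0 : dist A (γ (τ x)) = τ x := by
      rw [← hγA, hgeo 0 ⟨le_refl 0, hT0⟩ (τ x) (hτmem x)]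
      rw [abs_of_nonpos (by linarith [(hτmem x).1])]
      ring
    have h1 : dist A x ≤ τ x + D := by
      calc dist A x ≤ dist A (γ (τ x)) + dist (γ (τ x)) x := dist_triangle _ _ _
        _ ≤ τ x + D := by rw [h0, dist_comm]; exact add_le_add_right (hGd x hx) _
    have h2 : τ x - D ≤ dist A x := by
      have : dist A (γ (τ x)) ≤ dist A x + dist x (γ (τ x)) := dist_triangle _ _ _
      rw [h0] at this
      linarith [hGd x hx]
    rw [abs_le]; constructor <;> linarith
  have dCτ : ∀ x ∈ G, |dist x C - (T - τ x)| ≤ D := by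
    intro x hx
    have h0 : dist (γ (τ x)) C = T - τ x := by
      rw [← hγC, hgeo (τ x) (hτmem x) T ⟨hT0, le_refl T⟩]
      rw [abs_of_nonpos (by linarith [(hτmem x).2])]
      ring
    have h1 : dist x C ≤ (T - τ x) + D := by
      calc dist x C ≤ dist x (γ (τ x)) + dist (γ (τ x)) C := dist_triangle _ _ _
        _ ≤ D + (T - τ x) := add_le_add (hGd x hx) h0.le
        _ = (T - τ x) + D := by ring
    have h2 : (T - τ x) - D ≤ dist x C := by
      have : dist (γ (τ x)) C ≤ dist (γ (τ x)) x + dist x C := dist_triangle _ _ _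
      rw [h0, dist_comm (γ (τ x)) x] at this
      linarith [hGd x hx]
    rw [abs_le]; constructor <;> linarith
  have hτA : τ A ≤ D := by
    have := dAτ A hAG; rw [dist_self, abs_le] at this; linarith [this.1]
  have hτC : T - D ≤ τ C := by
    have := dCτ C hCG; rw [dist_self, abs_le] at this; linarith [this.1]
  have hτB1 : R - D ≤ τ B := by
    have := dAτ B hBG; rw [← hR, abs_le] at this; linarith [this.1]
  have hτB2 : τ B ≤ R + D := by
    have := dAτ B hBG; rw [← hR, abs_le] at this; linarith [this.2]
  have hTge : R + 4*D ≤ T := by rw [hT]; exact hACR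
  -- Part 1: the defect is nonnegative
  have lower : TSP A L₃ C ≤ TSP A L₁ B + TSP B L₂ C := by
    apply le_of_forall_pos_le_add
    intro ε hε
    obtain ⟨l₁, h1n, h1f, h1len⟩ := TSP_approx A B L₁ (half_pos hε)
    obtain ⟨l₂, h2n, h2f, h2len⟩ := TSP_approx B C L₂ (half_pos hε)
    set big : List X := l₁ ++ B :: l₂ with hbig
    set s : List X := big.dedup.filter (fun x => decide (x ∈ L₃)) with hs
    have hs_sub : s.Sublist big := (List.filter_sublist (p := fun x => decide (x ∈ L₃))).trans (List.dedup_sublist big)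
    have hs_nodup : s.Nodup := (big.nodup_dedup).filter _
    have hs_fin : s.toFinset = L₃ := by
      ext x
      rw [List.mem_toFinset, hs, List.mem_filter, List.mem_dedup]
      constructor
      · rintro ⟨-, h⟩; exact of_decide_eq_true h
      · intro hx
        refine ⟨?_, decide_eq_true hx⟩
        have hx12 : x ∈ L₁ ∪ L₂ := hL₃₂ hx
        rw [hbig, List.mem_append, List.mem_cons]
        rcases Finset.mem_union.1 hx12 with h | h
        · exact Or.inl (by rw [← h1f] at h; exact List.mem_toFinset.1 h)
        · exact Or.inr (Or.inr (by rw [← h2f] at h; exact List.mem_toFinset.1 h))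
    calc TSP A L₃ C ≤ routeLength A C s := TSP_le A C L₃ hs_nodup hs_fin
      _ ≤ routeLength A C big := rl_sublist hs_sub A C
      _ = routeLength A B l₁ + routeLength B C l₂ := rl_append A C B l₁ l₂
      _ ≤ TSP A L₁ B + TSP B L₂ C + ε := by linarith
  -- Part 2: the defect is at most 24(N+1)D
  have upper : TSP A L₁ B + TSP B L₂ C ≤ TSP A L₃ C + 24 * (N + 1) * D := by
    apply le_of_forall_pos_le_add
    intro ε hε
    obtain ⟨q₀, hq₀n, hq₀f, hq₀len⟩ := TSP_approx A C L₃ hε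
    set q : List X := q₀.filter (fun x => decide (dist A x < R - 4*D ∨ R + 4*D < dist A x))
      with hqdef
    have hq_rl : routeLength A C q ≤ routeLength A C q₀ :=
      rl_sublist (List.filter_sublist (l := q₀)) A C
    have hq_nodup : q.Nodup := hq₀n.filter _
    have hqmem : ∀ x ∈ q, x ∈ L₃ ∧ (dist A x < R - 4*D ∨ R + 4*D < dist A x) := by
      intro x hx
      rw [hqdef, List.mem_filter] at hx
      refine ⟨?_, of_decide_eq_true hx.2⟩
      rw [← hq₀f]
      exact List.mem_toFinset.2 hx.1
    have hqG : ∀ x ∈ q, x ∈ G := fun x hx => hLG x (hL₃₂ (hqmem x hx).1)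
    have hqclass : ∀ x ∈ q, x ∈ G ∧ (τ x ≤ R - 3*D ∨ R + 3*D ≤ τ x) := by
      intro x hx
      refine ⟨hqG x hx, ?_⟩
      have habs := abs_le.1 (dAτ x (hqG x hx))
      rcases (hqmem x hx).2 with h | h
      · exact Or.inl (by linarith [habs.1, habs.2])
      · exact Or.inr (by linarith [habs.1, habs.2])
    obtain ⟨σ₁, σ₂, hperm, hσ₁, hσ₂, hrlσ⟩ :=
      uncross τ G D (R - 3*D) (R + 3*D) hD (by linarith) dub dlb A C hAG hCG
        (by linarith) (by linarith)
        (q.dropWhile (fun x => decide (τ x ≤ R - 3*D))).length q (le_refl _) hqclass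
    -- middle point collections
    set K₁ : Finset X := L₁.filter (fun x => R - 4*D ≤ dist A x) with hK₁def
    set K₂ : Finset X := L₂.filter (fun x => dist A x ≤ R + 4*D) with hK₂def
    have hK₁card : K₁.card ≤ N := by
      rw [hN]
      apply Finset.card_le_card
      intro x hx
      rw [hK₁def, Finset.mem_filter] at hx
      exact Finset.mem_filter.2 ⟨Finset.mem_union_left _ hx.1, hx.2, hL₁ x hx.1⟩
    have hK₂card : K₂.card ≤ N := by
      rw [hN]
      apply Finset.card_le_card
      intro x hx
      rw [hK₂def, Finset.mem_filter] at hx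
      exact Finset.mem_filter.2 ⟨Finset.mem_union_right _ hx.1, hL₂ x hx.1, hx.2⟩
    have hK₁τ : ∀ x ∈ K₁, x ∈ G ∧ R - 5*D ≤ τ x ∧ τ x ≤ R + 5*D := by
      intro x hx
      rw [hK₁def, Finset.mem_filter] at hx
      have hxG : x ∈ G := hLG x (Finset.mem_union_left _ hx.1)
      have habs := abs_le.1 (dAτ x hxG)
      have h1 := hL₁ x hx.1
      exact ⟨hxG, by linarith [habs.1, habs.2], by linarith [habs.1, habs.2]⟩
    have hK₂τ : ∀ x ∈ K₂, x ∈ G ∧ R - 5*D ≤ τ x ∧ τ x ≤ R + 5*D := by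
      intro x hx
      rw [hK₂def, Finset.mem_filter] at hx
      have hxG : x ∈ G := hLG x (Finset.mem_union_right _ hx.1)
      have habs := abs_le.1 (dAτ x hxG)
      have h1 := hL₂ x hx.1
      exact ⟨hxG, by linarith [habs.1, habs.2], by linarith [habs.1, habs.2]⟩
    -- sorted middle lists
    haveI hdecrel : DecidableRel (fun u v : X => τ u ≤ τ v) := fun a b => Real.decidableLE _ _
    haveI : IsTotal X (fun u v : X => τ u ≤ τ v) := ⟨fun a b => le_total (τ a) (τ b)⟩
    haveI : IsTrans X (fun u v : X => τ u ≤ τ v) := ⟨fun a b c hab hbc => le_trans hab hbc⟩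
    set M₁ : List X := K₁.toList.insertionSort (fun u v : X => τ u ≤ τ v) with hM₁def
    set M₂ : List X := K₂.toList.insertionSort (fun u v : X => τ u ≤ τ v) with hM₂def
    have hM₁p : M₁.Perm K₁.toList := List.perm_insertionSort _ _
    have hM₂p : M₂.Perm K₂.toList := List.perm_insertionSort _ _
    have hM₁chain : M₁.Chain' (fun u v : X => τ u ≤ τ v) :=
      (List.pairwise_insertionSort _ _).isChain
    have hM₂chain : M₂.Chain' (fun u v : X => τ u ≤ τ v) :=
      (List.pairwise_insertionSort _ _).isChain
    have hM₁mem : ∀ x, x ∈ M₁ ↔ x ∈ K₁ := fun x => by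
      rw [hM₁p.mem_iff, Finset.mem_toList]
    have hM₂mem : ∀ x, x ∈ M₂ ↔ x ∈ K₂ := fun x => by
      rw [hM₂p.mem_iff, Finset.mem_toList]
    have hM₁len : (M₁.length : ℝ) = (K₁.card : ℝ) := by
      rw [hM₁p.length_eq, Finset.length_toList]
    have hM₂len : (M₂.length : ℝ) = (K₂.card : ℝ) := by
      rw [hM₂p.length_eq, Finset.length_toList]
    have hM₁nodup : M₁.Nodup := hM₁p.nodup_iff.2 K₁.nodup_toList
    have hM₂nodup : M₂.Nodup := hM₂p.nodup_iff.2 K₂.nodup_toList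
    -- σ facts
    have hσσn : (σ₁ ++ σ₂).Nodup := hperm.nodup_iff.2 hq_nodup
    have hσ₁n : σ₁.Nodup := (List.nodup_append.1 hσσn).1
    have hσ₂n : σ₂.Nodup := (List.nodup_append.1 hσσn).2.1
    have hσ₁q : ∀ x ∈ σ₁, x ∈ q := fun x hx => hperm.subset (List.mem_append_left σ₂ hx)
    have hσ₂q : ∀ x ∈ σ₂, x ∈ q := fun x hx => hperm.subset (List.mem_append_right σ₁ hx)
    have hσ₁low : ∀ x ∈ σ₁, dist A x < R - 4*D := by
      intro x hx
      rcases (hqmem x (hσ₁q x hx)).2 with h | h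
      · exact h
      · exfalso
        have habs := abs_le.1 (dAτ x (hqG x (hσ₁q x hx)))
        have := (hσ₁ x hx).2
        linarith [habs.1, habs.2]
    have hσ₂high : ∀ x ∈ σ₂, R + 4*D < dist A x := by
      intro x hx
      rcases (hqmem x (hσ₂q x hx)).2 with h | h
      · exfalso
        have habs := abs_le.1 (dAτ x (hqG x (hσ₂q x hx)))
        have := (hσ₂ x hx).2
        linarith [habs.1, habs.2]
      · exact h
    have hσ₁L₁ : ∀ x ∈ σ₁, x ∈ L₁ := by
      intro x hx
      have hx3 : x ∈ L₃ := (hqmem x (hσ₁q x hx)).1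
      rcases Finset.mem_union.1 (hL₃₂ hx3) with h | h
      · exact h
      · exact absurd (hL₂ x h) (by push_neg; linarith [hσ₁low x hx])
    have hσ₂L₂ : ∀ x ∈ σ₂, x ∈ L₂ := by
      intro x hx
      have hx3 : x ∈ L₃ := (hqmem x (hσ₂q x hx)).1
      rcases Finset.mem_union.1 (hL₃₂ hx3) with h | h
      · exact absurd (hL₁ x h) (by push_neg; linarith [hσ₂high x hx])
      · exact h
    -- route 1 validity
    have hr₁nodup : (σ₁ ++ M₁).Nodup := by
      rw [List.nodup_append]
      refine ⟨hσ₁n, hM₁nodup, ?_⟩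
      intro a ha b ha' hab
      subst hab
      have h1 := hσ₁low a ha
      have h2 : R - 4*D ≤ dist A a := (Finset.mem_filter.1 ((hM₁mem a).1 ha')).2
      linarith [h2]
    have hr₁fin : (σ₁ ++ M₁).toFinset = L₁ := by
      ext x
      rw [List.mem_toFinset, List.mem_append]
      constructor
      · rintro (h | h)
        · exact hσ₁L₁ x h
        · exact (Finset.mem_filter.1 ((hM₁mem x).1 h)).1
      · intro hx
        by_cases h4 : R - 4*D ≤ dist A x
        · exact Or.inr ((hM₁mem x).2 (Finset.mem_filter.2 ⟨hx, h4⟩))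
        · push_neg at h4
          have hx2 : x ∉ L₂ := fun h => absurd (hL₂ x h) (by push_neg; linarith)
          have hx3 : x ∈ L₃ := hL₃₁ (Finset.mem_symmDiff.2 (Or.inl ⟨hx, hx2⟩))
          have hxq : x ∈ q := by
            rw [hqdef, List.mem_filter]
            refine ⟨List.mem_toFinset.1 (hq₀f ▸ hx3), decide_eq_true (Or.inl h4)⟩
          rcases List.mem_append.1 (hperm.mem_iff.2 hxq) with h | h
          · exact Or.inl h
          · exfalso
            have habs := abs_le.1 (dAτ x (hqG x hxq))
            have := (hσ₂ x h).2
            linarith [habs.1, habs.2]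
    -- route 2 validity
    have hr₂nodup : (M₂ ++ σ₂).Nodup := by
      rw [List.nodup_append]
      refine ⟨hM₂nodup, hσ₂n, ?_⟩
      intro a ha b ha' hab
      subst hab
      have h1 := hσ₂high a ha'
      have h2 : dist A a ≤ R + 4*D := (Finset.mem_filter.1 ((hM₂mem a).1 ha)).2
      linarith [h2]
    have hr₂fin : (M₂ ++ σ₂).toFinset = L₂ := by
      ext x
      rw [List.mem_toFinset, List.mem_append]
      constructor
      · rintro (h | h)
        · exact (Finset.mem_filter.1 ((hM₂mem x).1 h)).1
        · exact hσ₂L₂ x h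
      · intro hx
        by_cases h4 : dist A x ≤ R + 4*D
        · exact Or.inl ((hM₂mem x).2 (Finset.mem_filter.2 ⟨hx, h4⟩))
        · push_neg at h4
          have hx1 : x ∉ L₁ := fun h => absurd (hL₁ x h) (by push_neg; linarith)
          have hx3 : x ∈ L₃ := hL₃₁ (Finset.mem_symmDiff.2 (Or.inr ⟨hx, hx1⟩))
          have hxq : x ∈ q := by
            rw [hqdef, List.mem_filter]
            refine ⟨List.mem_toFinset.1 (hq₀f ▸ hx3), decide_eq_true (Or.inr h4)⟩
          rcases List.mem_append.1 (hperm.mem_iff.2 hxq) with h | h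
          · exfalso
            have habs := abs_le.1 (dAτ x (hqG x hxq))
            have := (hσ₁ x h).2
            linarith [habs.1, habs.2]
          · exact Or.inr h
    -- endpoint of σ₁
    set u : X := σ₁.getLastD A with hu
    have huG : u ∈ G ∧ τ u ≤ R - 3*D := by
      rcases List.mem_cons.1 (gld_mem_cons A σ₁) with h | h
      · rw [hu, h]; exact ⟨hAG, by linarith⟩
      · exact ⟨(hσ₁ u h).1, (hσ₁ u h).2⟩
    -- chain cost bounds
    have chain₁ : walk u M₁ + dist (M₁.getLastD u) B
        ≤ (τ B - τ u) + 2*D*(K₁.card : ℝ) + 18*D := by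
      by_cases hM₁e : M₁ = []
      · rw [hM₁e]
        simp only [walk_nil, gld_nil, zero_add]
        have h1 := dub u huG.1 B hBG
        have habs : |τ u - τ B| = τ B - τ u := by
          rw [abs_of_nonpos (by linarith)]; ring
        rw [habs] at h1
        have : (0:ℝ) ≤ 2*D*(K₁.card : ℝ) := by positivity
        linarith
      · have hws := walk_sorted τ G D dub M₁ u huG.1
          (fun x hx => (hK₁τ x ((hM₁mem x).1 hx)).1) hM₁chain
        have hmh := hK₁τ _ ((hM₁mem _).1 (headD_mem (a := u) hM₁e))
        have hml := hK₁τ _ ((hM₁mem _).1 (getLastD_mem (a := u) hM₁e))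
        have hdl := dub _ hml.1 B hBG
        have habs1 : |τ u - τ (M₁.headD u)| ≤ (τ (M₁.headD u) - τ u) + 4*D := by
          rcases abs_cases (τ u - τ (M₁.headD u)) with ⟨e, _⟩ | ⟨e, _⟩ <;>
            [skip; skip] <;> rw [e] <;> [linarith [hmh.2.1, huG.2]; linarith]
        have habs2 : |τ (M₁.getLastD u) - τ B| ≤ 6*D :=
          abs_le.2 ⟨by linarith [hml.2.1], by linarith [hml.2.2]⟩
        rw [hM₁len] at hws
        linarith [hws, hdl, habs1, habs2, hml.2.2, hmh.2.1]
    have chain₂ : ∀ w : X, w ∈ G → R + 3*D ≤ τ w →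
        walk B M₂ + dist (M₂.getLastD B) w
          ≤ (τ w - τ B) + 2*D*(K₂.card : ℝ) + 18*D := by
      intro w hwG hwτ
      by_cases hM₂e : M₂ = []
      · rw [hM₂e]
        simp only [walk_nil, gld_nil, zero_add]
        have h1 := dub B hBG w hwG
        have habs : |τ B - τ w| = τ w - τ B := by
          rw [abs_of_nonpos (by linarith)]; ring
        rw [habs] at h1
        have : (0:ℝ) ≤ 2*D*(K₂.card : ℝ) := by positivity
        linarith
      · have hws := walk_sorted τ G D dub M₂ B hBG
          (fun x hx => (hK₂τ x ((hM₂mem x).1 hx)).1) hM₂chain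
        have hmh := hK₂τ _ ((hM₂mem _).1 (headD_mem (a := B) hM₂e))
        have hml := hK₂τ _ ((hM₂mem _).1 (getLastD_mem (a := B) hM₂e))
        have hdl := dub _ hml.1 w hwG
        have habs1 : |τ B - τ (M₂.headD B)| ≤ 6*D :=
          abs_le.2 ⟨by linarith [hmh.2.2], by linarith [hmh.2.1]⟩
        have habs2 : |τ (M₂.getLastD B) - τ w| ≤ (τ w - τ (M₂.getLastD B)) + 4*D := by
          rcases abs_cases (τ (M₂.getLastD B) - τ w) with ⟨e, _⟩ | ⟨e, _⟩ <;>
            rw [e] <;> [linarith [hml.2.2]; linarith]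
        rw [hM₂len] at hws
        linarith [hws, hdl, habs1, habs2, hml.2.1, hmh.2.1, hmh.2.2]
    -- the key surgery estimate
    have main : ∀ w : X, w ∈ G → R + 3*D ≤ τ w →
        (walk u M₁ + dist (M₁.getLastD u) B) + (walk B M₂ + dist (M₂.getLastD B) w)
          ≤ dist u w + 24*((N:ℝ)+1)*D := by
      intro w hwG hwτ
      have hduw : (τ w - τ u) - 2*D ≤ dist u w := by
        have h1 := dlb u huG.1 w hwG
        have habs : |τ u - τ w| = τ w - τ u := by
          rw [abs_of_nonpos (by linarith [huG.2])]; ring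
        rw [habs] at h1
        exact h1
      rcases Nat.eq_zero_or_pos N with h0 | hpos
      · have hK₁0 : K₁ = ∅ := Finset.card_eq_zero.1 (Nat.le_zero.1 (h0 ▸ hK₁card))
        have hK₂0 : K₂ = ∅ := Finset.card_eq_zero.1 (Nat.le_zero.1 (h0 ▸ hK₂card))
        have hM₁0 : M₁ = [] := by rw [hM₁def, hK₁0]; simp
        have hM₂0 : M₂ = [] := by rw [hM₂def, hK₂0]; simp
        rw [hM₁0, hM₂0]
        simp only [walk_nil, gld_nil, zero_add]
        have h1 := dub u huG.1 B hBG
        have habs : |τ u - τ B| = τ B - τ u := by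
          rw [abs_of_nonpos (by linarith [huG.2])]; ring
        rw [habs] at h1
        have h2 := dub B hBG w hwG
        have habs2 : |τ B - τ w| = τ w - τ B := by
          rw [abs_of_nonpos (by linarith)]; ring
        rw [habs2] at h2
        have hN0 : (N:ℝ) = 0 := by rw [h0]; simp
        rw [hN0]
        linarith
      · have hk1 : (K₁.card : ℝ) ≤ (N:ℝ) := by exact_mod_cast hK₁card
        have hk2 : (K₂.card : ℝ) ≤ (N:ℝ) := by exact_mod_cast hK₂card
        have hN1 : (1:ℝ) ≤ (N:ℝ) := by exact_mod_cast hpos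
        have hc1 := chain₁
        have hc2 := chain₂ w hwG hwτ
        have t1 : 2*D*(K₁.card : ℝ) ≤ 2*D*(N:ℝ) :=
          mul_le_mul_of_nonneg_left hk1 (by linarith : (0:ℝ) ≤ 2*D)
        have t2 : 2*D*(K₂.card : ℝ) ≤ 2*D*(N:ℝ) :=
          mul_le_mul_of_nonneg_left hk2 (by linarith : (0:ℝ) ≤ 2*D)
        have t3 : 20*D*(1:ℝ) ≤ 20*D*(N:ℝ) :=
          mul_le_mul_of_nonneg_left hN1 (by linarith : (0:ℝ) ≤ 20*D)
        linarith [hc1, hc2, hduw, hD.le, t1, t2, t3]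
    -- expansions of route lengths
    have e1 : routeLength A B (σ₁ ++ M₁)
        = walk A σ₁ + (walk u M₁ + dist (M₁.getLastD u) B) := by
      rw [rl_eq_walk, walk_append, getLastD_append, ← hu]
      ring
    have hTSP1 : TSP A L₁ B ≤ routeLength A B (σ₁ ++ M₁) := TSP_le A B L₁ hr₁nodup hr₁fin
    have hTSP2 : TSP B L₂ C ≤ routeLength B C (M₂ ++ σ₂) := TSP_le B C L₂ hr₂nodup hr₂fin
    have hEXT : routeLength A B (σ₁ ++ M₁) + routeLength B C (M₂ ++ σ₂)
        ≤ routeLength A C (σ₁ ++ σ₂) + 24*((N:ℝ)+1)*D := by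
      cases hσ₂e : σ₂ with
      | nil =>
          have e2 : routeLength A C (σ₁ ++ ([] : List X)) = walk A σ₁ + dist u C := by
            rw [List.append_nil, rl_eq_walk, ← hu]
          have e3 : routeLength B C (M₂ ++ ([] : List X))
              = walk B M₂ + dist (M₂.getLastD B) C := by
            rw [List.append_nil, rl_eq_walk]
          rw [e1, e2, e3]
          have := main C hCG (by linarith)
          linarith
      | cons w σ₂' =>
          have hwmem : w ∈ σ₂ := by rw [hσ₂e]; simp
          have hwG : w ∈ G := (hσ₂ w hwmem).1
          have hwτ : R + 3*D ≤ τ w := (hσ₂ w hwmem).2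
          have e2 : routeLength A C (σ₁ ++ w :: σ₂')
              = walk A σ₁ + dist u w + routeLength w C σ₂' := by
            rw [rl_append, rl_eq_walk, ← hu]
          have e3 : routeLength B C (M₂ ++ w :: σ₂')
              = walk B M₂ + dist (M₂.getLastD B) w + routeLength w C σ₂' := by
            rw [rl_append, rl_eq_walk]
          rw [e1, e2, e3]
          have := main w hwG hwτ
          linarith
    have hfinal : routeLength A C (σ₁ ++ σ₂) ≤ TSP A L₃ C + ε :=
      le_trans hrlσ (le_trans hq_rl hq₀len.le)
    calc TSP A L₁ B + TSP B L₂ C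
        ≤ routeLength A B (σ₁ ++ M₁) + routeLength B C (M₂ ++ σ₂) := add_le_add hTSP1 hTSP2
      _ ≤ routeLength A C (σ₁ ++ σ₂) + 24*((N:ℝ)+1)*D := hEXT
      _ ≤ TSP A L₃ C + ε + 24*((N:ℝ)+1)*D := by linarith
      _ = TSP A L₃ C + 24*((N:ℝ)+1)*D + ε := by ring
  constructor
  · linarith
  · linarith
end

section
/- Let (X,d) be a metric space, let γ be a geodesic from A to C with T = d(A,C), and let R and D > 0 satisfy R − 4D ≥ 0 and R + 4D ≤ T. Set B_1 = γ(R − 4D) and B_2 = γ(R + 4D). Let P ∈ X satisfy dist(P, γ) ≤ D and d(A,P) ≤ R − 4D, and let Q ∈ X satisfy dist(Q, γ) ≤ D and d(A,Q) ≥ R + 4D. Then d(P, B_1) + d(B_2, Q) ≤ d(P, Q). -/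
open Metric

/-- **Claim (leap projection).** Let `γ : [0,T] → X` be a geodesic from `A` to `C` with
`T = d(A,C)`, let `D > 0` and `R` satisfy `R − 4D ≥ 0` and `R + 4D ≤ T`, and set
`B₁ = γ(R − 4D)`, `B₂ = γ(R + 4D)`. If `P` is within distance `D` of `γ` with
`d(A,P) ≤ R − 4D` and `Q` is within distance `D` of `γ` with `d(A,Q) ≥ R + 4D`, then
`d(P,B₁) + d(B₂,Q) ≤ d(P,Q)`. -/
theorem leap_projection
    {X : Type*} [MetricSpace X] (A C : X) (T : ℝ) (γ : ℝ → X)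
    (hT : T = dist A C) (hγA : γ 0 = A) (hγC : γ T = C)
    (hgeo : ∀ s ∈ Set.Icc (0 : ℝ) T, ∀ t ∈ Set.Icc (0 : ℝ) T, dist (γ s) (γ t) = |s - t|)
    (R D : ℝ) (hD : 0 < D) (hR₁ : 0 ≤ R - 4 * D) (hR₂ : R + 4 * D ≤ T)
    (P Q : X)
    (hPγ : infDist P (γ '' Set.Icc 0 T) ≤ D) (hPA : dist A P ≤ R - 4 * D)
    (hQγ : infDist Q (γ '' Set.Icc 0 T) ≤ D) (hQA : R + 4 * D ≤ dist A Q) :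
    dist P (γ (R - 4 * D)) + dist (γ (R + 4 * D)) Q ≤ dist P Q := by
  have hT0 : (0 : ℝ) ≤ T := le_trans (by linarith) hR₂
  have hlip : LipschitzOnWith 1 γ (Set.Icc 0 T) := by
    apply LipschitzOnWith.of_dist_le_mul
    intro s hs t ht
    rw [hgeo s hs t ht, Real.dist_eq]; simp
  have hcomp : IsCompact (γ '' Set.Icc 0 T) :=
    isCompact_Icc.image_of_continuousOn hlip.continuousOn
  have hne : (γ '' Set.Icc 0 T).Nonempty :=
    ⟨γ 0, Set.mem_image_of_mem _ ⟨le_rfl, hT0⟩⟩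
  obtain ⟨y, hy, hPy⟩ := hcomp.exists_infDist_eq_dist hne P
  obtain ⟨p, hp, rfl⟩ := hy
  obtain ⟨z, hz, hQz⟩ := hcomp.exists_infDist_eq_dist hne Q
  obtain ⟨q, hq, rfl⟩ := hz
  have hPp : dist P (γ p) ≤ D := by rw [← hPy]; exact hPγ
  have hQq : dist Q (γ q) ≤ D := by rw [← hQz]; exact hQγ
  have h0T : (0 : ℝ) ∈ Set.Icc (0 : ℝ) T := ⟨le_rfl, hT0⟩
  have hB1 : (R - 4 * D) ∈ Set.Icc (0 : ℝ) T := ⟨hR₁, by linarith⟩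
  have hB2 : (R + 4 * D) ∈ Set.Icc (0 : ℝ) T := ⟨by linarith, hR₂⟩
  have hAp : dist A (γ p) = p := by
    rw [← hγA, hgeo 0 h0T p hp, abs_of_nonpos (by linarith [hp.1])]
    ring
  have hAq : dist A (γ q) = q := by
    rw [← hγA, hgeo 0 h0T q hq, abs_of_nonpos (by linarith [hq.1])]
    ring
  have hpup : p ≤ R - 3 * D := by
    have := dist_triangle A P (γ p)
    rw [hAp] at this; linarith [dist_comm P (γ p) ▸ hPp]
  have hqlo : R + 3 * D ≤ q := by
    have := dist_triangle A (γ q) Q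
    rw [hAq] at this
    have := dist_comm Q (γ q) ▸ hQq
    linarith [dist_comm (γ q) Q ▸ hQq, dist_triangle A (γ q) Q]
  have hpq : dist (γ p) (γ q) = q - p := by
    rw [hgeo p hp q hq, abs_of_nonpos (by linarith)]; ring
  have h1 : dist P (γ (R - 4 * D)) ≤ dist P (γ p) + |p - (R - 4 * D)| := by
    have := dist_triangle P (γ p) (γ (R - 4 * D))
    rw [hgeo p hp _ hB1] at this; exact this
  have h2 : dist (γ (R + 4 * D)) Q ≤ |R + 4 * D - q| + dist (γ q) Q := by
    have := dist_triangle (γ (R + 4 * D)) (γ q) Q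
    rw [hgeo _ hB2 q hq] at this; exact this
  have h3 : dist (γ p) (γ q) ≤ dist (γ p) P + dist P Q + dist Q (γ q) :=
    dist_triangle4 _ _ _ _
  rw [hpq] at h3
  have e1 : dist (γ p) P = dist P (γ p) := dist_comm _ _
  have e2 : dist (γ q) Q = dist Q (γ q) := dist_comm _ _
  rcases abs_cases (p - (R - 4 * D)) with ⟨ha, _⟩ | ⟨ha, _⟩ <;>
    rcases abs_cases (R + 4 * D - q) with ⟨hb, _⟩ | ⟨hb, _⟩ <;>
      linarith
end

section
/- Let Q = (Q_n) be a defective adapted cocycle on Ω = G^{ℤ₊} such that each Q_n is nonnegative, E[Q_1] < ∞, and there exists a constant C_4 > 0 with E[|Ψ_{m,n}|] ≤ C_4 (m+n)^{1/4} for all m,n ≥ 1. Then the asymptotic rate of escape ℓ = lim_{n→∞} E[Q_n]/n exists and is a finite nonnegative real number, and there exists a constant C_3 > 0 such that |E[Q_n]/n − ℓ| ≤ C_3 n^{−3/4} for all n ≥ 1. -/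
open MeasureTheory ProbabilityTheory Filter Topology

/-- The shift map `θ` on the space of increments `Ω = G^{ℤ₊}`;
coordinate `k : ℕ` represents the increment `X_{k+1}`. -/
def shift {G : Type*} (ω : ℕ → G) : ℕ → G := fun k => ω (k + 1)

/-- `P` is the product measure `μ^{⊗ℤ₊}` on `Ω = G^{ℤ₊}`, characterized as the (unique)
probability measure whose coordinates are i.i.d. with common law `μ`. -/
def IsIIDProduct {G : Type*} [MeasurableSpace G] (μ : Measure G) (P : Measure (ℕ → G)) : Prop :=
  IsProbabilityMeasure P ∧
    iIndepFun (fun k (ω : ℕ → G) => ω k) P ∧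
    ∀ k, Measure.map (fun ω : ℕ → G => ω k) P = μ

/-- A defective adapted cocycle (DAC) on `Ω = G^{ℤ₊}`: `Q n` is measurable and depends
only on the first `n` increments, with the convention `Q 0 ≡ 0`. -/
structure DAC (G : Type*) [MeasurableSpace G] where
  Q : ℕ → (ℕ → G) → ℝ
  zero : ∀ ω, Q 0 ω = 0
  meas : ∀ n, Measurable (Q n)
  adapted : ∀ n (ω ω' : ℕ → G), (∀ k < n, ω k = ω' k) → Q n ω = Q n ω'

/-- The defect `Ψ_{m,n}(ω) = Q_m(ω) + Q_n(θ^m ω) − Q_{m+n}(ω)` of a DAC. -/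
def DAC.defect {G : Type*} [MeasurableSpace G] (𝒬 : DAC G) (m n : ℕ) (ω : ℕ → G) : ℝ :=
  𝒬.Q m ω + 𝒬.Q n (shift^[m] ω) - 𝒬.Q (m + n) ω

lemma shift_iterate {G : Type*} (m : ℕ) (ω : ℕ → G) (k : ℕ) :
    shift^[m] ω k = ω (k + m) := by
  induction m generalizing ω with
  | zero => rfl
  | succ m ih =>
      rw [Function.iterate_succ_apply, ih]
      show ω (k + m + 1) = ω (k + (m + 1))
      ring_nf

lemma measurable_shift {G : Type*} [MeasurableSpace G] :
    Measurable (shift : (ℕ → G) → (ℕ → G)) :=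
  measurable_pi_lambda _ (fun k => measurable_pi_apply (k + 1))

/-- The joint law of finitely many (distinct) coordinates under an i.i.d. product is `Measure.pi`. -/
lemma law_of_coords {G : Type*} [Countable G] [MeasurableSpace G] [MeasurableSingletonClass G]
    (μ : Measure G) (P : Measure (ℕ → G)) (hP : IsIIDProduct μ P)
    (n : ℕ) (e : Fin n → ℕ) (he : Function.Injective e) :
    Measure.map (fun ω : ℕ → G => fun i : Fin n => ω (e i)) P
      = Measure.pi (fun _ : Fin n => μ) := by
  have hmeasG : ∀ t : Set G, MeasurableSet t := fun t => t.to_countable.measurableSet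
  haveI : IsProbabilityMeasure P := hP.1
  haveI : IsProbabilityMeasure μ := by
    rw [← hP.2.2 0]
    exact Measure.isProbabilityMeasure_map (measurable_pi_apply 0).aemeasurable
  have hF : Measurable (fun ω : ℕ → G => fun i : Fin n => ω (e i)) :=
    measurable_pi_lambda _ (fun i => measurable_pi_apply (e i))
  symm
  apply Measure.pi_eq
  intro sfin hs
  classical
  set sets : ℕ → Set G := fun k => ⋂ (i : Fin n) (_ : e i = k), sfin i with hsets
  have hsets_e : ∀ i : Fin n, sets (e i) = sfin i := by
    intro i
    ext x
    simp only [hsets, Set.mem_iInter]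
    constructor
    · intro h; exact h i rfl
    · intro hx j hj; rwa [he hj]
  set S : Finset ℕ := Finset.image e Finset.univ with hS
  rw [Measure.map_apply hF (MeasurableSet.univ_pi (fun i => hs i))]
  have hpre : (fun ω : ℕ → G => fun i : Fin n => ω (e i)) ⁻¹' (Set.univ.pi sfin)
      = ⋂ k ∈ S, (fun ω : ℕ → G => ω k) ⁻¹' sets k := by
    ext ω
    simp only [Set.mem_preimage, Set.mem_univ_pi, Set.mem_iInter, hS, Finset.mem_image,
      Finset.mem_univ, true_and, Set.mem_preimage]
    constructor
    · rintro h k ⟨i, rfl⟩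
      rw [hsets_e i]
      exact h i
    · intro h i
      rw [← hsets_e i]
      exact h (e i) ⟨i, rfl⟩
  rw [hpre, hP.2.1.measure_inter_preimage_eq_mul S (fun k _ => hmeasG _)]
  rw [hS, Finset.prod_image (fun i _ j _ hij => he hij)]
  refine Finset.prod_congr rfl (fun i _ => ?_)
  rw [← hP.2.2 (e i), Measure.map_apply (measurable_pi_apply (e i)) (hmeasG _), hsets_e i]

section Invariance

variable {G : Type*} [Group G] [Countable G] [MeasurableSpace G] [MeasurableSingletonClass G]
  (μ : Measure G) (P : Measure (ℕ → G)) (hP : IsIIDProduct μ P) (𝒬 : DAC G)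

/-- Finite-coordinate version of `Q n`. -/
noncomputable def Qfin (𝒬 : DAC G) (n : ℕ) : (Fin n → G) → ℝ :=
  fun x => 𝒬.Q n (fun k => if h : k < n then x ⟨k, h⟩ else 1)

lemma Qfin_meas (n : ℕ) : Measurable (Qfin 𝒬 n) := by
  apply (𝒬.meas n).comp
  apply measurable_pi_lambda
  intro k
  by_cases h : k < n
  · simpa [h] using measurable_pi_apply (⟨k, h⟩ : Fin n)
  · simpa [h] using measurable_const

lemma Q_eq_Qfin (n m : ℕ) (ω : ℕ → G) :
    𝒬.Q n (shift^[m] ω) = Qfin 𝒬 n (fun i : Fin n => ω ((i : ℕ) + m)) := by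
  apply 𝒬.adapted
  intro k hk
  rw [shift_iterate]
  simp [Qfin, hk]

include hP in
lemma integral_Q_shift (n m : ℕ) :
    ∫ ω, 𝒬.Q n (shift^[m] ω) ∂P = ∫ ω, 𝒬.Q n ω ∂P := by
  have hFm : ∀ m : ℕ, Measurable (fun ω : ℕ → G => fun i : Fin n => ω ((i : ℕ) + m)) :=
    fun m => measurable_pi_lambda _ (fun i => measurable_pi_apply _)
  have hinj : ∀ m : ℕ, Function.Injective (fun i : Fin n => (i : ℕ) + m) := by
    intro m i j hij
    exact Fin.ext (Nat.add_right_cancel hij)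
  have law : ∀ m : ℕ, Measure.map (fun ω : ℕ → G => fun i : Fin n => ω ((i : ℕ) + m)) P
      = Measure.pi (fun _ : Fin n => μ) :=
    fun m => law_of_coords μ P hP n _ (hinj m)
  have key : ∀ m : ℕ, ∫ ω, 𝒬.Q n (shift^[m] ω) ∂P = ∫ x, Qfin 𝒬 n x ∂(Measure.pi (fun _ : Fin n => μ)) := by
    intro m
    rw [← law m, integral_map (hFm m).aemeasurable ((Qfin_meas 𝒬 n).aestronglyMeasurable)]
    exact integral_congr_ae (Eventually.of_forall (fun ω => Q_eq_Qfin 𝒬 n m ω))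
  have h0 := key 0
  simp only [Function.iterate_zero, id_eq] at h0
  rw [key m, ← h0]

include hP in
lemma integrable_Q_shift (n m : ℕ) (h : Integrable (𝒬.Q n) P) :
    Integrable (fun ω => 𝒬.Q n (shift^[m] ω)) P := by
  have hFm : ∀ m : ℕ, Measurable (fun ω : ℕ → G => fun i : Fin n => ω ((i : ℕ) + m)) :=
    fun m => measurable_pi_lambda _ (fun i => measurable_pi_apply _)
  have hinj : ∀ m : ℕ, Function.Injective (fun i : Fin n => (i : ℕ) + m) := by
    intro m i j hij
    exact Fin.ext (Nat.add_right_cancel hij)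
  have law : ∀ m : ℕ, Measure.map (fun ω : ℕ → G => fun i : Fin n => ω ((i : ℕ) + m)) P
      = Measure.pi (fun _ : Fin n => μ) :=
    fun m => law_of_coords μ P hP n _ (hinj m)
  have key : ∀ m : ℕ, Integrable (fun ω => 𝒬.Q n (shift^[m] ω)) P ↔
      Integrable (Qfin 𝒬 n) (Measure.pi (fun _ : Fin n => μ)) := by
    intro m
    rw [← law m, integrable_map_measure ((Qfin_meas 𝒬 n).aestronglyMeasurable) (hFm m).aemeasurable]
    constructor
    · intro h'
      exact h'.congr (Eventually.of_forall (fun ω => (Q_eq_Qfin 𝒬 n m ω)))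
    · intro h'
      exact h'.congr (Eventually.of_forall (fun ω => (Q_eq_Qfin 𝒬 n m ω).symm))
  rw [key m, ← key 0]
  simpa using h

end Invariance

section Main

variable {G : Type*} [Group G] [Countable G] [MeasurableSpace G] [MeasurableSingletonClass G]
  (μ : Measure G) (P : Measure (ℕ → G)) (hP : IsIIDProduct μ P) (𝒬 : DAC G)

lemma defect_meas (m n : ℕ) : Measurable (𝒬.defect m n) :=
  ((𝒬.meas m).add ((𝒬.meas n).comp (measurable_shift.iterate m))).sub (𝒬.meas (m + n))

lemma defect_integrable {m n : ℕ} {B : ℝ}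
    (h : ∫⁻ ω, ENNReal.ofReal |𝒬.defect m n ω| ∂P ≤ ENNReal.ofReal B) :
    Integrable (𝒬.defect m n) P := by
  refine ⟨(defect_meas 𝒬 m n).aestronglyMeasurable, ?_⟩
  rw [hasFiniteIntegral_iff_norm]
  simp only [Real.norm_eq_abs]
  exact lt_of_le_of_lt h ENNReal.ofReal_lt_top

include hP in
lemma integrable_Q (hmom : Integrable (𝒬.Q 1) P) (C₄ : ℝ)
    (hdef : ∀ m n : ℕ, 1 ≤ m → 1 ≤ n →
      ∫⁻ ω, ENNReal.ofReal |𝒬.defect m n ω| ∂P ≤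
        ENNReal.ofReal (C₄ * ((m + n : ℕ) : ℝ) ^ ((1 : ℝ) / 4))) :
    ∀ n, Integrable (𝒬.Q n) P := by
  intro n
  induction n with
  | zero =>
      have : 𝒬.Q 0 = fun _ => (0:ℝ) := funext 𝒬.zero
      rw [this]
      exact integrable_zero _ _ _
  | succ n ih =>
      rcases Nat.eq_zero_or_pos n with hn | hn
      · subst hn; exact hmom
      · have hd : Integrable (𝒬.defect n 1) P :=
          defect_integrable P 𝒬 (hdef n 1 hn le_rfl)
        have hform : 𝒬.Q (n+1) = fun ω => 𝒬.Q n ω + 𝒬.Q 1 (shift^[n] ω) - 𝒬.defect n 1 ω := by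
          funext ω
          simp only [DAC.defect]
          ring
        rw [hform]
        exact ((ih.add (integrable_Q_shift μ P hP 𝒬 1 n hmom)).sub hd)

end Main



lemma rpow_split (k n : ℕ) (e : ℝ) :
    ((2 ^ k * n : ℕ) : ℝ) ^ e = ((2:ℝ) ^ e) ^ k * (n : ℝ) ^ e := by
  push_cast
  rw [Real.mul_rpow (by positivity) (Nat.cast_nonneg n), ← Real.rpow_natCast (2:ℝ) k,
    ← Real.rpow_mul (by norm_num), ← Real.rpow_natCast ((2:ℝ) ^ e) k,
    ← Real.rpow_mul (by norm_num), mul_comm (k:ℝ) e]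

lemma escape_of_almost_additive (C : ℝ) (hC : 0 < C) (a : ℕ → ℝ)
    (hnn : ∀ n, 0 ≤ a n)
    (hsub : ∀ m n : ℕ, 1 ≤ m → 1 ≤ n →
      |a (m + n) - a m - a n| ≤ C * ((m + n : ℕ) : ℝ) ^ ((1:ℝ)/4)) :
    ∃ ℓ : ℝ, 0 ≤ ℓ ∧ Tendsto (fun n : ℕ => a n / n) atTop (𝓝 ℓ) ∧
      ∃ C₃ > (0:ℝ), ∀ n : ℕ, 1 ≤ n → |a n / n - ℓ| ≤ C₃ * (n : ℝ) ^ (-(3:ℝ)/4) := by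
  set r : ℝ := (2:ℝ) ^ (-(3:ℝ)/4) with hr_def
  have hr0 : 0 < r := Real.rpow_pos_of_pos two_pos _
  have hr1 : r < 1 := Real.rpow_lt_one_of_one_lt_of_neg one_lt_two (by norm_num)
  set s : ℝ := r / (1 - r) with hs_def
  have hs : 0 < s := div_pos hr0 (by linarith)
  set b : ℕ → ℝ := fun n => a n / n with hb_def
  have hbnn : ∀ n, 0 ≤ b n := fun n => div_nonneg (hnn n) (Nat.cast_nonneg n)
  -- quarter-power divided by x equals x^(-3/4)
  have hpow : ∀ x : ℝ, 0 < x → x ^ ((1:ℝ)/4) / x = x ^ (-(3:ℝ)/4) := by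
    intro x hx
    rw [show (-(3:ℝ)/4) = (1:ℝ)/4 - 1 by norm_num, Real.rpow_sub hx, Real.rpow_one]
  -- F1 : doubling estimate
  have F1 : ∀ n : ℕ, 1 ≤ n → |b (2*n) - b n| ≤ C * ((2*n : ℕ) : ℝ) ^ (-(3:ℝ)/4) := by
    intro n hn
    have hn0 : (0:ℝ) < (n:ℝ) := by exact_mod_cast hn
    have hx : (0:ℝ) < ((2*n : ℕ) : ℝ) := by push_cast; linarith
    have key : b (2*n) - b n = (a (2*n) - a n - a n) / ((2*n : ℕ) : ℝ) := by
      simp only [hb_def]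
      push_cast
      field_simp
      ring
    rw [key, abs_div, abs_of_pos hx, div_le_iff₀ hx, ← hpow _ hx]
    have := hsub n n hn hn
    rw [show n + n = 2*n by ring] at this
    calc |a (2*n) - a n - a n| ≤ C * ((2*n : ℕ) : ℝ) ^ ((1:ℝ)/4) := this
      _ = C * (((2*n : ℕ) : ℝ) ^ ((1:ℝ)/4) / ((2*n : ℕ) : ℝ)) * ((2*n : ℕ) : ℝ) := by
          field_simp
  -- F3 : comparing a (m*j) with j * a m
  have F3 : ∀ m : ℕ, 1 ≤ m → ∀ j : ℕ, 1 ≤ j →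
      |a (m*j) - j * a m| ≤ C * j * ((m*j : ℕ) : ℝ) ^ ((1:ℝ)/4) := by
    intro m hm
    intro j hj
    induction j, hj using Nat.le_induction with
    | base =>
        simp only [mul_one, Nat.cast_one, one_mul]
        have : |a m - a m| = 0 := by simp
        rw [this]
        positivity
    | succ j hj ih =>
        have h1 : |a (m*j + m) - a (m*j) - a m| ≤ C * ((m*j + m : ℕ) : ℝ) ^ ((1:ℝ)/4) :=
          hsub (m*j) m (le_trans hj (Nat.le_mul_of_pos_left j hm)) hm
        have hmono : ((m*j : ℕ) : ℝ) ^ ((1:ℝ)/4) ≤ ((m*(j+1) : ℕ) : ℝ) ^ ((1:ℝ)/4) := by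
          apply Real.rpow_le_rpow (Nat.cast_nonneg _) _ (by norm_num)
          exact_mod_cast Nat.mul_le_mul_left m (Nat.le_succ j)
        have heq : m * (j+1) = m*j + m := by ring
        calc |a (m*(j+1)) - (↑(j+1)) * a m|
            = |(a (m*j + m) - a (m*j) - a m) + (a (m*j) - j * a m)| := by
              rw [heq]; push_cast; ring_nf
          _ ≤ |a (m*j + m) - a (m*j) - a m| + |a (m*j) - j * a m| := abs_add_le _ _
          _ ≤ C * ((m*j + m : ℕ) : ℝ) ^ ((1:ℝ)/4) + C * j * ((m*j : ℕ) : ℝ) ^ ((1:ℝ)/4) := by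
              exact add_le_add h1 ih
          _ ≤ C * ((m*(j+1) : ℕ) : ℝ) ^ ((1:ℝ)/4) + C * j * ((m*(j+1) : ℕ) : ℝ) ^ ((1:ℝ)/4) := by
              rw [heq]
              gcongr
              omega
          _ = C * (↑(j+1)) * ((m*(j+1) : ℕ) : ℝ) ^ ((1:ℝ)/4) := by push_cast; ring
  -- F2 : iterated doubling
  have F2 : ∀ n : ℕ, 1 ≤ n → ∀ k : ℕ,
      |b (2^k * n) - b n| ≤ C * (∑ j ∈ Finset.range k, r^(j+1)) * (n : ℝ) ^ (-(3:ℝ)/4) := by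
    intro n hn k
    induction k with
    | zero => simp
    | succ k ih =>
        have h2 : 2^(k+1) * n = 2 * (2^k * n) := by ring
        have hkn : 1 ≤ 2^k * n := Nat.one_le_iff_ne_zero.2 (by positivity)
        have h1 := F1 (2^k * n) hkn
        have hbd : ((2*(2^k*n) : ℕ) : ℝ) ^ (-(3:ℝ)/4) = r^(k+1) * (n : ℝ) ^ (-(3:ℝ)/4) := by
          rw [show 2*(2^k*n) = 2^(k+1)*n by ring, rpow_split (k+1) n (-(3:ℝ)/4)]
        calc |b (2^(k+1) * n) - b n|
            ≤ |b (2*(2^k*n)) - b (2^k*n)| + |b (2^k*n) - b n| := by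
              rw [h2]; exact abs_sub_le _ _ _
          _ ≤ C * (r^(k+1) * (n : ℝ) ^ (-(3:ℝ)/4))
              + C * (∑ j ∈ Finset.range k, r^(j+1)) * (n : ℝ) ^ (-(3:ℝ)/4) := by
              refine add_le_add ?_ ih
              rw [← hbd]; exact h1
          _ = C * (∑ j ∈ Finset.range (k+1), r^(j+1)) * (n : ℝ) ^ (-(3:ℝ)/4) := by
              rw [Finset.sum_range_succ]; ring
  -- partial geometric sums bounded by s
  have hsum : ∀ k : ℕ, (∑ j ∈ Finset.range k, r^(j+1)) ≤ s := by
    intro k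
    have h1 : (∑ j ∈ Finset.range k, r^(j+1)) = r * ∑ j ∈ Finset.range k, r^j := by
      rw [Finset.mul_sum]; exact Finset.sum_congr rfl (fun j _ => by ring)
    have h2 : (∑ j ∈ Finset.range k, r^j) ≤ (1 - r)⁻¹ := by
      calc (∑ j ∈ Finset.range k, r^j) ≤ ∑' j : ℕ, r^j :=
            Summable.sum_le_tsum _ (fun i _ => by positivity) (summable_geometric_of_lt_one hr0.le hr1)
        _ = (1 - r)⁻¹ := tsum_geometric_of_lt_one hr0.le hr1
    rw [h1, hs_def, div_eq_mul_inv]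
    exact mul_le_mul_of_nonneg_left h2 hr0.le
  have F2' : ∀ n : ℕ, 1 ≤ n → ∀ k : ℕ,
      |b (2^k * n) - b n| ≤ C * s * (n : ℝ) ^ (-(3:ℝ)/4) := by
    intro n hn k
    refine (F2 n hn k).trans ?_
    have h0 : (0:ℝ) ≤ (n : ℝ) ^ (-(3:ℝ)/4) := Real.rpow_nonneg (Nat.cast_nonneg n) _
    exact mul_le_mul_of_nonneg_right (mul_le_mul_of_nonneg_left (hsum k) hC.le) h0
  -- Cauchy sequence along powers of two
  have hcauchy : CauchySeq (fun k : ℕ => b (2^k)) := by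
    apply cauchySeq_of_le_geometric r (C * r) hr1
    intro k
    rw [Real.dist_eq, abs_sub_comm]
    have h1 := F1 (2^k) (Nat.one_le_two_pow)
    have : ((2*2^k : ℕ) : ℝ) ^ (-(3:ℝ)/4) = r^(k+1) * 1 := by
      have := rpow_split (k+1) 1 (-(3:ℝ)/4)
      simpa [pow_succ, mul_comm] using this
    rw [this] at h1
    calc |b (2^(k+1)) - b (2^k)| = |b (2*2^k) - b (2^k)| := by rw [pow_succ, mul_comm]
      _ ≤ C * (r^(k+1) * 1) := h1
      _ = C * r * r^k := by ring
  obtain ⟨ℓ, hℓ⟩ := cauchySeq_tendsto_of_complete hcauchy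
  -- limits along 2^k * n
  have F5 : ∀ n : ℕ, 1 ≤ n → Tendsto (fun k : ℕ => b (2^k * n)) atTop (𝓝 ℓ) := by
    intro n hn
    have hdk : Tendsto (fun k : ℕ => b (2^k * n) - b (2^k)) atTop (𝓝 0) := by
      apply squeeze_zero_norm (a := fun k => (C * n * (n:ℝ) ^ (-(3:ℝ)/4)) * r^k)
      · intro k
        have hkn0 : (0:ℝ) < ((2^k * n : ℕ) : ℝ) := by
          have : 1 ≤ 2^k * n := Nat.one_le_iff_ne_zero.2 (by positivity)
          exact_mod_cast this
        have h2k0 : (0:ℝ) < ((2^k : ℕ) : ℝ) := by positivity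
        have h3 := F3 (2^k) Nat.one_le_two_pow n hn
        have key : b (2^k * n) - b (2^k)
            = (a (2^k * n) - n * a (2^k)) / ((2^k * n : ℕ) : ℝ) := by
          simp only [hb_def]
          push_cast
          field_simp
        rw [Real.norm_eq_abs, key, abs_div, abs_of_pos hkn0, div_le_iff₀ hkn0]
        calc |a (2^k * n) - n * a (2^k)| ≤ C * n * ((2^k*n : ℕ) : ℝ) ^ ((1:ℝ)/4) := h3
          _ = C * n * (((2^k*n : ℕ) : ℝ) ^ ((1:ℝ)/4) / ((2^k*n : ℕ) : ℝ)) * ((2^k*n : ℕ) : ℝ) := by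
              field_simp
          _ = C * n * ((2^k*n : ℕ) : ℝ) ^ (-(3:ℝ)/4) * ((2^k*n : ℕ) : ℝ) := by
              rw [hpow _ hkn0]
          _ = C * n * ((n:ℝ) ^ (-(3:ℝ)/4)) * r^k * ((2^k*n : ℕ) : ℝ) := by
              rw [rpow_split k n (-(3:ℝ)/4)]; ring
          _ = C * ↑n * (n:ℝ) ^ (-(3:ℝ)/4) * r ^ k * ((2^k*n : ℕ) : ℝ) := by ring
      · have := tendsto_pow_atTop_nhds_zero_of_lt_one hr0.le hr1
        simpa using this.const_mul (C * n * (n:ℝ) ^ (-(3:ℝ)/4))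
    have : Tendsto (fun k : ℕ => b (2^k) + (b (2^k * n) - b (2^k))) atTop (𝓝 (ℓ + 0)) :=
      hℓ.add hdk
    simpa using this
  -- error bound
  have F6 : ∀ n : ℕ, 1 ≤ n → |b n - ℓ| ≤ C * s * (n : ℝ) ^ (-(3:ℝ)/4) := by
    intro n hn
    have h1 : Tendsto (fun k : ℕ => |b (2^k * n) - b n|) atTop (𝓝 |ℓ - b n|) :=
      ((F5 n hn).sub tendsto_const_nhds).abs
    have h2 : |ℓ - b n| ≤ C * s * (n : ℝ) ^ (-(3:ℝ)/4) :=
      le_of_tendsto h1 (Eventually.of_forall (fun k => F2' n hn k))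
    rwa [abs_sub_comm]
  -- convergence of the full sequence
  have F7 : Tendsto b atTop (𝓝 ℓ) := by
    rw [← tendsto_sub_nhds_zero_iff]
    apply squeeze_zero_norm' (a := fun n : ℕ => C * s * (n:ℝ) ^ (-(3:ℝ)/4))
    · filter_upwards [eventually_ge_atTop 1] with n hn
      rw [Real.norm_eq_abs]
      exact F6 n hn
    · have h1 : Tendsto (fun x : ℝ => x ^ (-(3:ℝ)/4)) atTop (𝓝 0) := by
        rw [show (-(3:ℝ)/4) = -((3:ℝ)/4) by norm_num]
        exact tendsto_rpow_neg_atTop (by norm_num)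
      have h2 : Tendsto (fun n : ℕ => ((n:ℝ)) ^ (-(3:ℝ)/4)) atTop (𝓝 0) :=
        h1.comp tendsto_natCast_atTop_atTop
      simpa using h2.const_mul (C * s)
  have hℓ0 : 0 ≤ ℓ := ge_of_tendsto' hℓ (fun k => hbnn (2^k))
  exact ⟨ℓ, hℓ0, F7, C * s, by positivity, F6⟩


/-- **Theorem (rate of escape and error bound).** Let `Q` be a nonnegative DAC with
`E[Q₁] < ∞` and suppose there is `C₄ > 0` with `E[|Ψ_{m,n}|] ≤ C₄ (m+n)^{1/4}` for all
`m, n ≥ 1`. Then the rate of escape `ℓ = lim_{n→∞} E[Q_n]/n` exists, is a finite nonnegative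
real, and there is `C₃ > 0` with `|E[Q_n]/n − ℓ| ≤ C₃ n^{−3/4}` for all `n ≥ 1`. -/
theorem rate_of_escape_exists_with_error_bound
    {G : Type*} [Group G] [Countable G] [MeasurableSpace G] [MeasurableSingletonClass G]
    (μ : Measure G) (P : Measure (ℕ → G)) (hP : IsIIDProduct μ P)
    (𝒬 : DAC G) (hpos : ∀ n ω, 0 ≤ 𝒬.Q n ω)
    (hmom : Integrable (𝒬.Q 1) P)
    (C₄ : ℝ) (hC₄ : 0 < C₄)
    (hdef : ∀ m n : ℕ, 1 ≤ m → 1 ≤ n →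
      ∫⁻ ω, ENNReal.ofReal |𝒬.defect m n ω| ∂P ≤
        ENNReal.ofReal (C₄ * ((m + n : ℕ) : ℝ) ^ ((1 : ℝ) / 4))) :
    ∃ ℓ : ℝ, 0 ≤ ℓ ∧
      Tendsto (fun n : ℕ => (∫ ω, 𝒬.Q n ω ∂P) / n) atTop (𝓝 ℓ) ∧
      ∃ C₃ > (0 : ℝ), ∀ n : ℕ, 1 ≤ n →
        |(∫ ω, 𝒬.Q n ω ∂P) / n - ℓ| ≤ C₃ * (n : ℝ) ^ (-(3 : ℝ) / 4) := by
  have hint : ∀ n, Integrable (𝒬.Q n) P := integrable_Q μ P hP 𝒬 hmom C₄ hdef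
  have hnn : ∀ n, 0 ≤ ∫ ω, 𝒬.Q n ω ∂P := fun n => integral_nonneg (hpos n)
  have hsub : ∀ m n : ℕ, 1 ≤ m → 1 ≤ n →
      |(∫ ω, 𝒬.Q (m+n) ω ∂P) - (∫ ω, 𝒬.Q m ω ∂P) - (∫ ω, 𝒬.Q n ω ∂P)|
        ≤ C₄ * ((m + n : ℕ) : ℝ) ^ ((1:ℝ)/4) := by
    intro m n hm hn
    have hshift := integrable_Q_shift μ P hP 𝒬 n m (hint n)
    have hd : Integrable (𝒬.defect m n) P := defect_integrable P 𝒬 (hdef m n hm hn)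
    have hEq : ∫ ω, 𝒬.defect m n ω ∂P
        = (∫ ω, 𝒬.Q m ω ∂P) + (∫ ω, 𝒬.Q n ω ∂P) - ∫ ω, 𝒬.Q (m+n) ω ∂P := by
      have hadd : Integrable (fun ω => 𝒬.Q m ω + 𝒬.Q n (shift^[m] ω)) P := (hint m).add hshift
      have e1 : ∫ ω, 𝒬.defect m n ω ∂P
          = (∫ ω, (𝒬.Q m ω + 𝒬.Q n (shift^[m] ω)) ∂P) - ∫ ω, 𝒬.Q (m+n) ω ∂P :=
        integral_sub hadd (hint (m+n))
      have e2 : ∫ ω, (𝒬.Q m ω + 𝒬.Q n (shift^[m] ω)) ∂P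
          = (∫ ω, 𝒬.Q m ω ∂P) + ∫ ω, 𝒬.Q n (shift^[m] ω) ∂P :=
        integral_add (hint m) hshift
      rw [e1, e2, integral_Q_shift μ P hP 𝒬 n m]
    have habs : |(∫ ω, 𝒬.Q (m+n) ω ∂P) - (∫ ω, 𝒬.Q m ω ∂P) - (∫ ω, 𝒬.Q n ω ∂P)|
        = |∫ ω, 𝒬.defect m n ω ∂P| := by
      rw [hEq, ← abs_neg]
      congr 1
      ring
    have h1 : |∫ ω, 𝒬.defect m n ω ∂P| ≤ ∫ ω, |𝒬.defect m n ω| ∂P := by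
      simpa [Real.norm_eq_abs] using norm_integral_le_integral_norm (μ := P) (𝒬.defect m n)
    have h2 : ∫ ω, |𝒬.defect m n ω| ∂P ≤ C₄ * ((m + n : ℕ) : ℝ) ^ ((1:ℝ)/4) := by
      have hof : ENNReal.ofReal (∫ ω, |𝒬.defect m n ω| ∂P)
          = ∫⁻ ω, ENNReal.ofReal |𝒬.defect m n ω| ∂P :=
        ofReal_integral_eq_lintegral_ofReal hd.abs (ae_of_all _ fun ω => abs_nonneg _)
      have hle := hdef m n hm hn
      rw [← hof] at hle
      exact (ENNReal.ofReal_le_ofReal_iff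
        (mul_nonneg hC₄.le (Real.rpow_nonneg (Nat.cast_nonneg _) _))).mp hle
    rw [habs]
    exact h1.trans h2
  exact escape_of_almost_additive C₄ hC₄ (fun n => ∫ ω, 𝒬.Q n ω ∂P) hnn hsub
end

section
/- Let G be a countable group with a left-invariant metric d, let μ be a probability measure on G, and let p ≥ 1 be such that κ_{2p}(μ,d) = E[d(id, X_1)^{2p}] < ∞. Then for all m, n ≥ 1 the defect of the length cocycle satisfies the truncated moment bound E[|Ψ_{m,n}|^p · 1_{{|Ψ_{m,n}| ≥ (m+n)²}}] ≤ 2^{2p} κ_{2p}(μ,d). -/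
open MeasureTheory ProbabilityTheory Filter Topology

/-- The position `Z_n = X_1 ⋯ X_n` of the random walk at time `n` (so `Z_0 = id`). -/
def walk {G : Type*} [Group G] (n : ℕ) (ω : ℕ → G) : G := ((List.range n).map ω).prod

/-- The defect `Ψ_{m,n} = d(id, Z_m) + d(Z_m, Z_{m+n}) − d(id, Z_{m+n})`
of the length cocycle. -/
def lengthDefect {G : Type*} [Group G] [MetricSpace G] (m n : ℕ) (ω : ℕ → G) : ℝ :=
  dist (1 : G) (walk m ω) + dist (walk m ω) (walk (m + n) ω) - dist (1 : G) (walk (m + n) ω)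

lemma walk_succ' {G : Type*} [Group G] (n : ℕ) (ω : ℕ → G) :
    walk (n + 1) ω = walk n ω * ω n := by
  simp [walk, List.range_succ]

lemma dist_one_walk_le' {G : Type*} [Group G] [MetricSpace G]
    (hinv : ∀ g x y : G, dist (g * x) (g * y) = dist x y) (m : ℕ) (ω : ℕ → G) :
    dist (1 : G) (walk m ω) ≤ ∑ k ∈ Finset.range m, dist (1 : G) (ω k) := by
  induction m with
  | zero => simp [walk]
  | succ k ih =>
    calc dist (1 : G) (walk (k + 1) ω)
        ≤ dist (1 : G) (walk k ω) + dist (walk k ω) (walk (k + 1) ω) := dist_triangle _ _ _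
      _ ≤ (∑ j ∈ Finset.range k, dist (1 : G) (ω j)) + dist (1 : G) (ω k) := by
          have : dist (walk k ω) (walk (k + 1) ω) = dist (1 : G) (ω k) := by
            rw [walk_succ']
            simpa using hinv (walk k ω) 1 (ω k)
          rw [this]; exact add_le_add_left ih _
      _ = ∑ j ∈ Finset.range (k + 1), dist (1 : G) (ω j) := by
          rw [Finset.sum_range_succ]

lemma lengthDefect_nonneg' {G : Type*} [Group G] [MetricSpace G] (m n : ℕ) (ω : ℕ → G) :
    0 ≤ lengthDefect m n ω := by
  have := dist_triangle (1 : G) (walk m ω) (walk (m + n) ω)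
  unfold lengthDefect; linarith

lemma lengthDefect_le' {G : Type*} [Group G] [MetricSpace G] (m n : ℕ) (ω : ℕ → G) :
    lengthDefect m n ω ≤ 2 * dist (1 : G) (walk m ω) := by
  have h := dist_triangle (walk m ω) (1 : G) (walk (m + n) ω)
  have h2 : dist (walk m ω) (1 : G) = dist (1 : G) (walk m ω) := dist_comm _ _
  unfold lengthDefect; linarith

lemma lengthDefect_pointwise_bound' {G : Type*} [Group G] [MetricSpace G]
    (hinv : ∀ g x y : G, dist (g * x) (g * y) = dist x y)
    (p : ℝ) (hp : 1 ≤ p) (m n : ℕ) (hm : 1 ≤ m) (ω : ℕ → G)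
    (hω : ((m + n : ℕ) : ℝ) ^ 2 ≤ |lengthDefect m n ω|) :
    |lengthDefect m n ω| ^ p ≤
      (2 : ℝ) ^ (2 * p) * (m : ℝ) ^ (2 * p - 1) / ((m + n : ℕ) : ℝ) ^ (2 * p)
        * ∑ k ∈ Finset.range m, dist (1 : G) (ω k) ^ (2 * p) := by
  set t := |lengthDefect m n ω| with ht
  set a := ((m + n : ℕ) : ℝ) with haa
  set S := ∑ k ∈ Finset.range m, dist (1 : G) (ω k) with hS
  have hp0 : (0 : ℝ) < p := lt_of_lt_of_le one_pos hp
  have h2p : (0 : ℝ) ≤ 2 * p := by linarith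
  have ha1 : (1 : ℝ) ≤ a := by
    have h : (1 : ℕ) ≤ m + n := le_trans hm (Nat.le_add_right m n)
    rw [haa]; exact_mod_cast h
  have ha0 : (0 : ℝ) < a := lt_of_lt_of_le one_pos ha1
  have ht1 : (1 : ℝ) ≤ t := le_trans (by nlinarith) hω
  have ht0 : (0 : ℝ) < t := lt_of_lt_of_le one_pos ht1
  have hS0 : (0 : ℝ) ≤ S := Finset.sum_nonneg fun k _ => dist_nonneg
  have hA : ((a ^ 2 : ℝ)) ^ p = a ^ (2 * p) := by
    rw [← Real.rpow_natCast a 2, ← Real.rpow_mul ha0.le]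
    norm_num
  have step1 : t ^ p * a ^ (2 * p) ≤ t ^ (2 * p) := by
    have h1 : a ^ (2 * p) ≤ t ^ p := by
      rw [← hA]
      exact Real.rpow_le_rpow (sq_nonneg a) hω hp0.le
    have h2 : t ^ (2 * p) = t ^ p * t ^ p := by
      rw [← Real.rpow_add ht0]; ring_nf
    rw [h2]
    exact mul_le_mul_of_nonneg_left h1 (Real.rpow_nonneg ht0.le p)
  have htS : t ≤ 2 * S := by
    have := lengthDefect_le' m n ω
    have h0 := lengthDefect_nonneg' m n ω
    have hw := dist_one_walk_le' hinv m ω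
    rw [ht, abs_of_nonneg h0]
    linarith
  have step2 : t ^ (2 * p) ≤ (2:ℝ) ^ (2 * p) * ((m : ℝ) ^ (2 * p - 1) *
      ∑ k ∈ Finset.range m, dist (1 : G) (ω k) ^ (2 * p)) := by
    have h1 : t ^ (2 * p) ≤ (2 * S) ^ (2 * p) :=
      Real.rpow_le_rpow ht0.le htS h2p
    have h2 : (2 * S) ^ (2 * p) = (2:ℝ) ^ (2 * p) * S ^ (2 * p) :=
      Real.mul_rpow (by norm_num) hS0
    have h3 : S ^ (2 * p) ≤ (m : ℝ) ^ (2 * p - 1) *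
        ∑ k ∈ Finset.range m, dist (1 : G) (ω k) ^ (2 * p) := by
      have := Real.rpow_sum_le_const_mul_sum_rpow_of_nonneg (Finset.range m)
        (f := fun k => dist (1 : G) (ω k)) (by linarith : 1 ≤ 2 * p)
        (fun k _ => dist_nonneg)
      simpa [hS] using this
    calc t ^ (2*p) ≤ (2*S) ^ (2*p) := h1
      _ = (2:ℝ)^(2*p) * S^(2*p) := h2
      _ ≤ _ := by
          apply mul_le_mul_of_nonneg_left h3 (Real.rpow_nonneg (by norm_num) _)
  have hapos : (0:ℝ) < a ^ (2*p) := Real.rpow_pos_of_pos ha0 _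
  rw [div_mul_eq_mul_div, le_div_iff₀ hapos]
  calc t ^ p * a ^ (2*p) ≤ t ^ (2*p) := step1
    _ ≤ _ := by rw [mul_assoc]; exact step2

/-- **Truncated moment bound for the defect of the length cocycle:** if
`κ_{2p}(μ,d) = E[d(id,X₁)^{2p}] < ∞`, then for all `m, n ≥ 1`,
`E[|Ψ_{m,n}|^p · 1_{|Ψ_{m,n}| ≥ (m+n)²}] ≤ 2^{2p} κ_{2p}(μ,d)`. -/
theorem length_defect_truncated_moment_bound
    {G : Type*} [Group G] [Countable G] [MeasurableSpace G] [MeasurableSingletonClass G]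
    [MetricSpace G] (hinv : ∀ g x y : G, dist (g * x) (g * y) = dist x y)
    (μ : Measure G) (P : Measure (ℕ → G)) (hP : IsIIDProduct μ P)
    (p : ℝ) (hp : 1 ≤ p)
    (hκ : ∫⁻ ω, ENNReal.ofReal (dist (1 : G) (ω 0) ^ (2 * p)) ∂P < ⊤)
    (m n : ℕ) (hm : 1 ≤ m) (hn : 1 ≤ n) :
    ∫⁻ ω in {ω : ℕ → G | ((m + n : ℕ) : ℝ) ^ 2 ≤ |lengthDefect m n ω|},
        ENNReal.ofReal (|lengthDefect m n ω| ^ p) ∂P ≤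
      ENNReal.ofReal ((2 : ℝ) ^ (2 * p)) *
        ∫⁻ ω, ENNReal.ofReal (dist (1 : G) (ω 0) ^ (2 * p)) ∂P := by
  set C : ℝ := (2 : ℝ) ^ (2 * p) * (m : ℝ) ^ (2 * p - 1) / ((m + n : ℕ) : ℝ) ^ (2 * p) with hCdef
  have hm0 : (0 : ℝ) < (m : ℝ) := by exact_mod_cast hm
  have ha0 : (0 : ℝ) < ((m + n : ℕ) : ℝ) := by
    have : (1 : ℕ) ≤ m + n := le_trans hm (Nat.le_add_right m n)
    exact_mod_cast this
  have h2p : (0 : ℝ) ≤ 2 * p := by linarith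
  have hC0 : 0 ≤ C := by
    apply div_nonneg
    · exact mul_nonneg (Real.rpow_nonneg (by norm_num) _) (Real.rpow_nonneg hm0.le _)
    · exact Real.rpow_nonneg ha0.le _
  have hCm : C * (m : ℝ) ≤ (2 : ℝ) ^ (2 * p) := by
    have hmm : (m : ℝ) ^ (2 * p - 1) * (m : ℝ) = (m : ℝ) ^ (2 * p) := by
      calc (m : ℝ) ^ (2 * p - 1) * (m : ℝ)
          = (m : ℝ) ^ (2 * p - 1) * (m : ℝ) ^ (1 : ℝ) := by rw [Real.rpow_one]
        _ = (m : ℝ) ^ (2 * p - 1 + 1) := (Real.rpow_add hm0 _ _).symm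
        _ = (m : ℝ) ^ (2 * p) := by ring_nf
    have hma : (m : ℝ) ^ (2 * p) ≤ ((m + n : ℕ) : ℝ) ^ (2 * p) := by
      apply Real.rpow_le_rpow hm0.le _ h2p
      exact_mod_cast Nat.le_add_right m n
    have hapos : (0 : ℝ) < ((m + n : ℕ) : ℝ) ^ (2 * p) := Real.rpow_pos_of_pos ha0 _
    have : C * (m : ℝ) = (2 : ℝ) ^ (2 * p) * ((m : ℝ) ^ (2 * p) / ((m + n : ℕ) : ℝ) ^ (2 * p)) := by
      rw [hCdef]; field_simp; rw [← hmm]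
    rw [this]
    have hdiv : (m : ℝ) ^ (2 * p) / ((m + n : ℕ) : ℝ) ^ (2 * p) ≤ 1 :=
      (div_le_one hapos).mpr hma
    calc (2 : ℝ) ^ (2 * p) * ((m : ℝ) ^ (2 * p) / ((m + n : ℕ) : ℝ) ^ (2 * p))
        ≤ (2 : ℝ) ^ (2 * p) * 1 :=
          mul_le_mul_of_nonneg_left hdiv (Real.rpow_nonneg (by norm_num) _)
      _ = (2 : ℝ) ^ (2 * p) := mul_one _
  set κ := ∫⁻ ω, ENNReal.ofReal (dist (1 : G) (ω 0) ^ (2 * p)) ∂P with hκdef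
  have hfk : ∀ k : ℕ,
      Measurable (fun ω : ℕ → G => ENNReal.ofReal (dist (1 : G) (ω k) ^ (2 * p))) :=
    fun k => (measurable_of_countable
      (fun x : G => ENNReal.ofReal (dist (1 : G) x ^ (2 * p)))).comp (measurable_pi_apply k)
  have hcoord : ∀ k : ℕ, ∫⁻ ω, ENNReal.ofReal (dist (1 : G) (ω k) ^ (2 * p)) ∂P = κ := by
    intro k
    have hf : Measurable (fun x : G => ENNReal.ofReal (dist (1 : G) x ^ (2 * p))) :=
      measurable_of_countable _
    calc ∫⁻ ω, ENNReal.ofReal (dist (1 : G) (ω k) ^ (2 * p)) ∂P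
        = ∫⁻ x, ENNReal.ofReal (dist (1 : G) x ^ (2 * p))
            ∂(Measure.map (fun ω : ℕ → G => ω k) P) :=
          (lintegral_map hf (measurable_pi_apply k)).symm
      _ = ∫⁻ x, ENNReal.ofReal (dist (1 : G) x ^ (2 * p))
            ∂(Measure.map (fun ω : ℕ → G => ω 0) P) := by rw [hP.2.2 k, hP.2.2 0]
      _ = κ := lintegral_map hf (measurable_pi_apply 0)
  set g : (ℕ → G) → ENNReal := fun ω =>
    ENNReal.ofReal C * ∑ k ∈ Finset.range m, ENNReal.ofReal (dist (1 : G) (ω k) ^ (2 * p))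
    with hg
  have hgmeas : Measurable g :=
    (Finset.measurable_sum (Finset.range m) fun k _ => hfk k).const_mul _
  have hle : ∀ ω ∈ {ω : ℕ → G | ((m + n : ℕ) : ℝ) ^ 2 ≤ |lengthDefect m n ω|},
      ENNReal.ofReal (|lengthDefect m n ω| ^ p) ≤ g ω := by
    intro ω hω
    calc ENNReal.ofReal (|lengthDefect m n ω| ^ p)
        ≤ ENNReal.ofReal (C * ∑ k ∈ Finset.range m, dist (1 : G) (ω k) ^ (2 * p)) :=
          ENNReal.ofReal_le_ofReal (lengthDefect_pointwise_bound' hinv p hp m n hm ω hω)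
      _ = g ω := by
          rw [hg, ENNReal.ofReal_mul hC0,
            ENNReal.ofReal_sum_of_nonneg (fun k _ => Real.rpow_nonneg dist_nonneg _)]
  calc ∫⁻ ω in {ω : ℕ → G | ((m + n : ℕ) : ℝ) ^ 2 ≤ |lengthDefect m n ω|},
        ENNReal.ofReal (|lengthDefect m n ω| ^ p) ∂P
      ≤ ∫⁻ ω in {ω : ℕ → G | ((m + n : ℕ) : ℝ) ^ 2 ≤ |lengthDefect m n ω|}, g ω ∂P :=
        setLIntegral_mono hgmeas hle
    _ ≤ ∫⁻ ω, g ω ∂P := setLIntegral_le_lintegral _ _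
    _ = ENNReal.ofReal C * ((m : ENNReal) * κ) := by
        rw [hg, lintegral_const_mul _ (Finset.measurable_sum (Finset.range m) fun k _ => hfk k),
          lintegral_finset_sum (Finset.range m) (fun k _ => hfk k)]
        congr 1
        simp [hcoord, Finset.sum_const, nsmul_eq_mul]
    _ = ENNReal.ofReal (C * (m : ℝ)) * κ := by
        rw [ENNReal.ofReal_mul hC0, ENNReal.ofReal_natCast, mul_assoc]
    _ ≤ ENNReal.ofReal ((2 : ℝ) ^ (2 * p)) * κ :=
        mul_le_mul_left (ENNReal.ofReal_le_ofReal hCm) κ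
end
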